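/- arXiv:2108.04765 — 2 statements merged into one kernel-verified Lean document; each statement's English description precedes it below -/
import Mathlib

section
/- (Conversion to divergence form.) Let α ∈ ℝ, q > d, let 𝒮 ⊂ Λ be a lattice basis, and let f : Λ → ℝ^N satisfy |f(ℓ)| ≤ C_f⟨ℓ⟩^{−q}(log⟨ℓ⟩)^α for all ℓ ∈ Λ and ∑_{ℓ∈Λ} f(ℓ) = 0. Then there exist g : Λ → (ℝ^N)^𝒮 and a constant C independent of f and ℓ such that f(ℓ) = ∑_{σ∈𝒮}(g_σ(ℓ−σ) − g_σ(ℓ)) for all ℓ ∈ Λ, and |g(ℓ)| ≤ C·C_f⟨ℓ⟩^{−q+1}(log⟨ℓ⟩)^α for all ℓ ∈ Λ. -/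
noncomputable section

open scoped BigOperators
open MeasureTheory Filter Topology

open scoped Classical ENNReal NNReal

namespace Defect

abbrev Vec (n : ℕ) : Type := Fin n → ℝ

/-- Euclidean norm of a vector in `ℝ^n`. -/
def enorm {n : ℕ} (v : Vec n) : ℝ := Real.sqrt (∑ i, (v i) ^ 2)

/-- `⟨x⟩ := |x| + 2`. -/
def ang {n : ℕ} (v : Vec n) : ℝ := enorm v + 2

def dotV {n : ℕ} (x y : Vec n) : ℝ := ∑ i, x i * y i

/-- Matrix-vector product for a plain `Fin N → Fin N → ℝ` matrix. -/
def mulV {N : ℕ} (M : Fin N → Fin N → ℝ) (v : Vec N) : Vec N := fun i => ∑ j, M i j * v j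

/-- Euclidean (Frobenius) norm of an `N × N` array. -/
def mnorm {N : ℕ} (M : Fin N → Fin N → ℝ) : ℝ := Real.sqrt (∑ i, ∑ j, (M i j) ^ 2)

/-- The lattice point `A z` for `z ∈ ℤ^d`. -/
def latticePt (d : ℕ) (A : Matrix (Fin d) (Fin d) ℝ) (z : Fin d → ℤ) : Vec d :=
  fun i => ∑ j, A i j * (z j : ℝ)

/-- The Bravais lattice `Λ = A ℤ^d`. -/
def Lattice (d : ℕ) (A : Matrix (Fin d) (Fin d) ℝ) : Set (Vec d) :=
  Set.range (latticePt d A)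

/-- First-order finite difference `D_ρ u (ℓ) = u(ℓ+ρ) - u(ℓ)`. -/
def D1 {d : ℕ} {M : Type} [AddCommGroup M] (ρ : Vec d) (u : Vec d → M) (ℓ : Vec d) : M :=
  u (ℓ + ρ) - u ℓ

/-- Iterated finite difference `D_{ρ₁} ⋯ D_{ρ_j} u (ℓ)` (closed form). -/
def Dmulti {d : ℕ} {M : Type} [AddCommGroup M] [Module ℝ M] {j : ℕ}
    (ρs : Fin j → Vec d) (u : Vec d → M) (ℓ : Vec d) : M :=
  ∑ S : Finset (Fin j), ((-1 : ℝ) ^ (j - S.card)) • u (ℓ + ∑ i ∈ S, ρs i)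

/-- `|Du(ℓ)|²`, the squared Euclidean norm of the stencil of first differences. -/
def Dnorm1Sq {d N : ℕ} (R : Finset (Vec d)) (u : Vec d → Vec N) (ℓ : Vec d) : ℝ :=
  ∑ ρ ∈ R, (enorm (D1 ρ u ℓ)) ^ 2

/-- `|D^j u(ℓ)|`, the Euclidean norm of the array `(D_{ρ⃗} u(ℓ))_{ρ⃗ ∈ R^j}`. -/
def DnormJ {d N : ℕ} (R : Finset (Vec d)) (j : ℕ) (u : Vec d → Vec N) (ℓ : Vec d) : ℝ :=
  Real.sqrt (∑ ρs : Fin j → {x // x ∈ R},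
    (enorm (Dmulti (fun i => (ρs i : Vec d)) u ℓ)) ^ 2)

/-- The linearized lattice operator
`H[u](ℓ) = ∑_{σ,ρ∈R} (C_{σρ} D_ρ u(ℓ-σ) - C_{σρ} D_ρ u(ℓ))`. -/
def Hop (d N : ℕ) (R : Finset (Vec d)) (C : Vec d → Vec d → Fin N → Fin N → ℝ)
    (u : Vec d → Vec N) (ℓ : Vec d) : Vec N :=
  ∑ σ ∈ R, ∑ ρ ∈ R, (mulV (C σ ρ) (D1 ρ u (ℓ - σ)) - mulV (C σ ρ) (D1 ρ u ℓ))

/-- `u ∈ 𝓗¹`. -/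
def InH1 {d N : ℕ} (A : Matrix (Fin d) (Fin d) ℝ) (R : Finset (Vec d))
    (u : Vec d → Vec N) : Prop :=
  Summable fun z : Fin d → ℤ => Dnorm1Sq R u (latticePt d A z)

/-- `u ∈ 𝓗ᶜ` : the stencil `Du` has bounded support on the lattice. -/
def InHc {d N : ℕ} (A : Matrix (Fin d) (Fin d) ℝ) (R : Finset (Vec d))
    (u : Vec d → Vec N) : Prop :=
  ∃ rad : ℝ, ∀ z : Fin d → ℤ, rad ≤ enorm (latticePt d A z) →
    ∀ ρ ∈ R, D1 ρ u (latticePt d A z) = 0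

/-- Stability of the lattice operator `H`. -/
def IsStable (d N : ℕ) (A : Matrix (Fin d) (Fin d) ℝ) (R : Finset (Vec d))
    (C : Vec d → Vec d → Fin N → Fin N → ℝ) : Prop :=
  ∃ c₀ : ℝ, 0 < c₀ ∧ ∀ u : Vec d → Vec N, InHc A R u →
    c₀ * (∑' z : Fin d → ℤ, Dnorm1Sq R u (latticePt d A z)) ≤
      ∑' z : Fin d → ℤ, ∑ σ ∈ R, ∑ ρ ∈ R,
        dotV (D1 σ u (latticePt d A z)) (mulV (C σ ρ) (D1 ρ u (latticePt d A z)))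

/-- `k`-th column of a matrix-valued function. -/
def col {d N : ℕ} (G : Vec d → Fin N → Fin N → ℝ) (k : Fin N) : Vec d → Vec N :=
  fun x i => G x i k

/-- `|D^j 𝒢(ℓ)|` for matrix-valued `𝒢`. -/
def DnormJmat {d N : ℕ} (R : Finset (Vec d)) (j : ℕ)
    (G : Vec d → Fin N → Fin N → ℝ) (ℓ : Vec d) : ℝ :=
  Real.sqrt (∑ k : Fin N, (DnormJ R j (col G k) ℓ) ^ 2)

/-- `𝒢` is a lattice Green's function for `H`. -/
def IsLatticeGreen (d N : ℕ) (A : Matrix (Fin d) (Fin d) ℝ) (R : Finset (Vec d))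
    (C : Vec d → Vec d → Fin N → Fin N → ℝ) (G : Vec d → Fin N → Fin N → ℝ) : Prop :=
  (∀ (k : Fin N) (z : Fin d → ℤ),
      Hop d N R C (col G k) (latticePt d A z) =
        if latticePt d A z = 0 then Pi.single k 1 else 0) ∧
  (∀ j : ℕ, 1 ≤ j → ∃ cj : ℝ, ∀ z : Fin d → ℤ,
      DnormJmat R j G (latticePt d A z) ≤
        cj * ang (latticePt d A z) ^ ((2 : ℝ) - d - j))

/-- A symmetric array `b ∈ (ℝ^{Fin d})^{⊙ i}`. -/
def SymArr {d i : ℕ} (b : (Fin i → Fin d) → ℝ) : Prop :=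
  ∀ (π : Equiv.Perm (Fin i)) (σv : Fin i → Fin d), b (σv ∘ π) = b σv

/-- `b : D_𝒮^i f`, a multipole term built from the basis `s`. -/
def multipole (d N : ℕ) (s : Fin d → Vec d) (i : ℕ) (b : (Fin i → Fin d) → ℝ)
    (f : Vec d → Vec N) : Vec d → Vec N :=
  fun ℓ => ∑ σv : Fin i → Fin d, b σv • Dmulti (fun m => s (σv m)) f ℓ

/-- Iterated partial derivative `∂_{j₁} ⋯ ∂_{j_i} f (x)`. -/
def pderivMulti {d : ℕ} (i : ℕ) (js : Fin i → Fin d) (f : Vec d → ℝ) (x : Vec d) : ℝ :=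
  iteratedFDeriv ℝ i f x (fun m => Pi.single (js m) (1 : ℝ))

/-- `a : ∇^i f (x)` for a tensor `a ∈ (ℝ^d)^{⊗ i}`. -/
def aContract {d : ℕ} (i : ℕ) (a : (Fin i → Fin d) → ℝ) (f : Vec d → ℝ) (x : Vec d) : ℝ :=
  ∑ js : Fin i → Fin d, a js * pderivMulti i js f x

/-- Elementary tensor `σ⃗^⊗` as an array. -/
def tensorPow {d k : ℕ} (σs : Fin k → Vec d) : (Fin k → Fin d) → ℝ :=
  fun js => ∏ m, σs m (js m)

/-- Symmetric tensor product `σ⃗^⊙`. -/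
def symTensor {d k : ℕ} (σs : Fin k → Vec d) : (Fin k → Fin d) → ℝ :=
  fun js => ((k.factorial : ℝ))⁻¹ * ∑ π : Equiv.Perm (Fin k), tensorPow (σs ∘ π) js

/-- A symmetric tensor (array invariant under index permutations). -/
def SymTensor {d k : ℕ} (T : (Fin k → Fin d) → ℝ) : Prop :=
  ∀ (π : Equiv.Perm (Fin k)) (js : Fin k → Fin d), T (js ∘ π) = T js

/-- `∂V/∂g_ρ (gs)` as a vector in `ℝ^N`. -/
def gradV {d N : ℕ} (R : Finset (Vec d)) (V : ({x // x ∈ R} → Vec N) → ℝ)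
    (ρ : {x // x ∈ R}) (gs : {x // x ∈ R} → Vec N) : Vec N :=
  fun i => fderiv ℝ V gs (Pi.single ρ (Pi.single i 1))

/-- The finite-difference stencil `Du(ℓ) = (D_ρ u(ℓ))_{ρ ∈ R}`. -/
def Dstencil {d N : ℕ} (R : Finset (Vec d)) (u : Vec d → Vec N) (ℓ : Vec d) :
    {x // x ∈ R} → Vec N :=
  fun ρ => D1 (ρ : Vec d) u ℓ

/-- `C_{σρ} = ∂²V/∂g_σ ∂g_ρ (0)`. -/
def CofV {d N : ℕ} (R : Finset (Vec d)) (V : ({x // x ∈ R} → Vec N) → ℝ)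
    (σ ρ : Vec d) (i j : Fin N) : ℝ :=
  if hσ : σ ∈ R then
    if hρ : ρ ∈ R then
      iteratedFDeriv ℝ 2 V 0
        ![Pi.single ⟨σ, hσ⟩ (Pi.single i 1), Pi.single ⟨ρ, hρ⟩ (Pi.single j 1)]
    else 0
  else 0

/-- Summand of the first variation `δE(u)[v]` at a site. -/
def deltaEsite {d N : ℕ} (R : Finset (Vec d)) (V : ({x // x ∈ R} → Vec N) → ℝ)
    (u v : Vec d → Vec N) (ℓ : Vec d) : ℝ :=
  ∑ ρ ∈ R.attach, dotV (gradV R V ρ (Dstencil R u ℓ)) (D1 (ρ : Vec d) v ℓ)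

/-- The pointwise atomistic force `δE(u)(ℓ)`. -/
def deltaEpt {d N : ℕ} (R : Finset (Vec d)) (V : ({x // x ∈ R} → Vec N) → ℝ)
    (u : Vec d → Vec N) (ℓ : Vec d) : Vec N :=
  ∑ ρ ∈ R.attach,
    (gradV R V ρ (Dstencil R u (ℓ - (ρ : Vec d))) - gradV R V ρ (Dstencil R u ℓ))

/-- Point symmetry of the site potential. -/
def PointSym {d N : ℕ} (R : Finset (Vec d)) (hRsym : ∀ ρ ∈ R, -ρ ∈ R)
    (V : ({x // x ∈ R} → Vec N) → ℝ) : Prop :=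
  ∀ gs : {x // x ∈ R} → Vec N,
    V (fun ρ => -(gs ⟨-(ρ : Vec d), hRsym _ ρ.2⟩)) = V gs

/-- The Cauchy–Born elasticity tensor `ℂ_{iajb}`. -/
def CB {d N : ℕ} (A : Matrix (Fin d) (Fin d) ℝ) (R : Finset (Vec d))
    (C : Vec d → Vec d → Fin N → Fin N → ℝ)
    (i : Fin N) (a : Fin d) (j : Fin N) (b : Fin d) : ℝ :=
  (|A.det|)⁻¹ * ∑ ρ ∈ R, ∑ σ ∈ R, C ρ σ i j * ρ a * σ b

end Defect

namespace DFAux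


def halve (x : ℤ) : ℤ := if 0 ≤ x then ((x.natAbs / 2 : ℕ) : ℤ) else -((x.natAbs / 2 : ℕ) : ℤ)

lemma halve_natAbs (x : ℤ) : (halve x).natAbs = x.natAbs / 2 := by
  unfold halve; split <;> omega

lemma halve_bounds (x : ℤ) : 2 * halve x - 1 ≤ x ∧ x ≤ 2 * halve x + 1 := by
  unfold halve; split <;> omega

variable {d : ℕ}

def chi (x t : ℤ) : ℤ := if x ≤ t then 1 else 0

lemma chi_step (x t : ℤ) : chi x t - chi x (t-1) = if t = x then 1 else 0 := by
  unfold chi; split_ifs <;> omega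

def ee (d : ℕ) (i : Fin d) : Fin d → ℤ := Pi.single i 1

noncomputable def stair (a b n : Fin d → ℤ) (i : Fin d) : ℤ :=
  if (∀ j, j < i → n j = b j) ∧ (∀ j, i < j → n j = a j)
  then chi (b i) (n i) - chi (a i) (n i) else 0

lemma stair_natAbs_le (a b n : Fin d → ℤ) (i : Fin d) : (stair a b n i).natAbs ≤ 1 := by
  unfold stair chi; split_ifs <;> simp

noncomputable def TT (a b n : Fin d → ℤ) (K : ℕ) : ℤ :=
  if (∀ j : Fin d, (j:ℕ) < K → n j = b j) ∧ (∀ j : Fin d, K ≤ (j:ℕ) → n j = a j) then 1 else 0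

lemma TT_zero (a b n : Fin d → ℤ) : TT a b n 0 = if n = a then 1 else 0 := by
  unfold TT
  congr 1
  simp only [eq_iff_iff]
  constructor
  · rintro ⟨-, h2⟩; funext j; exact h2 j (Nat.zero_le _)
  · rintro rfl; exact ⟨fun j h => absurd h (Nat.not_lt_zero _), fun j _ => rfl⟩

lemma TT_last (a b n : Fin d → ℤ) : TT a b n d = if n = b then 1 else 0 := by
  unfold TT
  congr 1
  simp only [eq_iff_iff]
  constructor
  · rintro ⟨h1, -⟩; funext j; exact h1 j j.isLt
  · rintro rfl; exact ⟨fun j _ => rfl, fun j h => absurd j.isLt (by omega)⟩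

lemma stair_step (a b n : Fin d → ℤ) (i : Fin d) :
    stair a b (n - ee d i) i - stair a b n i = TT a b n i - TT a b n (i+1) := by
  have hsub : ∀ j, (n - ee d i) j = if j = i then n j - 1 else n j := by
    intro j
    by_cases h : j = i
    · subst h; simp [ee]
    · simp [ee, h, Pi.single_eq_of_ne h]
  unfold stair TT
  have hC1 : (∀ j, j < i → (n - ee d i) j = b j) ↔ (∀ j, j < i → n j = b j) := by
    constructor <;> intro h j hj <;> have := h j hj <;>
      rw [hsub j] at * <;> simp [Fin.ne_of_lt hj] at * <;> assumption
  have hC2 : (∀ j, i < j → (n - ee d i) j = a j) ↔ (∀ j, i < j → n j = a j) := by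
    constructor <;> intro h j hj <;> have := h j hj <;>
      rw [hsub j] at * <;> simp [(Fin.ne_of_lt hj).symm] at * <;> assumption
  have hni : (n - ee d i) i = n i - 1 := by rw [hsub i]; simp
  have hlt1 : (∀ j : Fin d, (j:ℕ) < (i:ℕ) → n j = b j) ↔ (∀ j, j < i → n j = b j) := by
    constructor <;> intro h j hj <;> exact h j hj
  have hlt2 : (∀ j : Fin d, (i:ℕ) ≤ (j:ℕ) → n j = a j) ↔ (n i = a i ∧ ∀ j, i < j → n j = a j) := by
    constructor
    · intro h; exact ⟨h i le_rfl, fun j hj => h j (le_of_lt hj)⟩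
    · rintro ⟨h0, h⟩ j hj
      rcases eq_or_lt_of_le hj with he | hl
      · have : j = i := Fin.ext he.symm
        rw [this]; exact h0
      · exact h j hl
  have hlt3 : (∀ j : Fin d, (j:ℕ) < (i:ℕ)+1 → n j = b j) ↔ ((∀ j, j < i → n j = b j) ∧ n i = b i) := by
    constructor
    · intro h; exact ⟨fun j hj => h j (Nat.lt_succ_of_lt hj), h i (Nat.lt_succ_self _)⟩
    · rintro ⟨h, h0⟩ j hj
      rcases Nat.lt_succ_iff_lt_or_eq.1 hj with hl | he
      · exact h j hl
      · have : j = i := Fin.ext he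
        rw [this]; exact h0
  have hlt4 : (∀ j : Fin d, (i:ℕ)+1 ≤ (j:ℕ) → n j = a j) ↔ (∀ j, i < j → n j = a j) := by
    constructor <;> intro h j hj <;> exact h j hj
  by_cases hc : (∀ j, j < i → n j = b j) ∧ (∀ j, i < j → n j = a j)
  · rw [if_pos (by rw [hC1, hC2]; exact hc), if_pos hc, hni]
    have e1 : (chi (b i) (n i - 1) - chi (a i) (n i - 1)) - (chi (b i) (n i) - chi (a i) (n i))
        = (chi (a i) (n i) - chi (a i) (n i - 1)) - (chi (b i) (n i) - chi (b i) (n i - 1)) := by ring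
    rw [e1, chi_step, chi_step]
    have ea : (if n i = a i then (1:ℤ) else 0)
        = (if (∀ j : Fin d, (j:ℕ) < (i:ℕ) → n j = b j) ∧ (∀ j : Fin d, (i:ℕ) ≤ (j:ℕ) → n j = a j)
           then (1:ℤ) else 0) := by
      by_cases h : n i = a i
      · rw [if_pos h, if_pos ⟨hlt1.2 hc.1, hlt2.2 ⟨h, hc.2⟩⟩]
      · rw [if_neg h, if_neg (fun hh => h (hlt2.1 hh.2).1)]
    have eb : (if n i = b i then (1:ℤ) else 0)
        = (if (∀ j : Fin d, (j:ℕ) < (i:ℕ)+1 → n j = b j) ∧ (∀ j : Fin d, (i:ℕ)+1 ≤ (j:ℕ) → n j = a j)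
           then (1:ℤ) else 0) := by
      by_cases h : n i = b i
      · rw [if_pos h, if_pos ⟨hlt3.2 ⟨hc.1, h⟩, hlt4.2 hc.2⟩]
      · rw [if_neg h, if_neg (fun hh => h (hlt3.1 hh.1).2)]
    rw [ea, eb]
  · rw [if_neg (by rw [hC1, hC2]; exact hc), if_neg hc]
    have h1 : ¬ ((∀ j : Fin d, (j:ℕ) < (i:ℕ) → n j = b j) ∧ (∀ j : Fin d, (i:ℕ) ≤ (j:ℕ) → n j = a j)) := by
      intro h; exact hc ⟨hlt1.1 h.1, (hlt2.1 h.2).2⟩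
    have h2 : ¬ ((∀ j : Fin d, (j:ℕ) < (i:ℕ)+1 → n j = b j) ∧ (∀ j : Fin d, (i:ℕ)+1 ≤ (j:ℕ) → n j = a j)) := by
      intro h; exact hc ⟨(hlt3.1 h.1).1, hlt4.1 h.2⟩
    rw [if_neg h1, if_neg h2]

lemma stair_div (a b n : Fin d → ℤ) :
    ∑ i, (stair a b (n - ee d i) i - stair a b n i)
      = (if n = a then 1 else 0) - (if n = b then 1 else 0) := by
  have : ∀ i : Fin d, stair a b (n - ee d i) i - stair a b n i = TT a b n i - TT a b n (i+1) :=
    stair_step a b n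
  calc ∑ i, (stair a b (n - ee d i) i - stair a b n i)
      = ∑ i : Fin d, (TT a b n i - TT a b n ((i:ℕ)+1)) := by
        exact Finset.sum_congr rfl fun i _ => this i
    _ = ∑ k ∈ Finset.range d, (TT a b n k - TT a b n (k+1)) := by
        rw [Finset.sum_range fun k => _]
    _ = TT a b n 0 - TT a b n d := Finset.sum_range_sub' _ _
    _ = _ := by rw [TT_zero, TT_last]

def hv (m : Fin d → ℤ) : Fin d → ℤ := fun j => halve (m j)

def Snorm (m : Fin d → ℤ) : ℕ := Finset.univ.sup fun j => (m j).natAbs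

lemma Snorm_le_iff {m : Fin d → ℤ} {c : ℕ} : Snorm m ≤ c ↔ ∀ j, (m j).natAbs ≤ c := by
  unfold Snorm
  rw [Finset.sup_le_iff]
  exact ⟨fun h j => h j (Finset.mem_univ _), fun h j _ => h j⟩

lemma le_Snorm (m : Fin d → ℤ) (j : Fin d) : (m j).natAbs ≤ Snorm m :=
  Finset.le_sup (f := fun j => (m j).natAbs) (Finset.mem_univ j)

lemma Snorm_eq_zero {m : Fin d → ℤ} (h : Snorm m = 0) : m = 0 := by
  funext j
  have := le_Snorm m j
  rw [h, Nat.le_zero] at this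
  simpa [Int.natAbs_eq_zero] using this

lemma hv_iter_natAbs (m : Fin d → ℤ) (k : ℕ) (j : Fin d) :
    ((hv^[k] m) j).natAbs = (m j).natAbs / 2^k := by
  induction k generalizing m with
  | zero => simp
  | succ k ih =>
    rw [Function.iterate_succ_apply, ih (hv m)]
    show (halve (m j)).natAbs / 2 ^ k = (m j).natAbs / 2^(k+1)
    rw [halve_natAbs, Nat.div_div_eq_div_mul, pow_succ']

lemma hv_iter_bounds (m : Fin d → ℤ) (k : ℕ) (j : Fin d) :
    (2:ℤ)^k * (hv^[k] m) j - (2^k - 1) ≤ m j ∧ m j ≤ 2^k * (hv^[k] m) j + (2^k - 1) := by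
  induction k generalizing m with
  | zero => simp
  | succ k ih =>
    rw [Function.iterate_succ_apply]
    have h1 := ih (hv m)
    have h2 := halve_bounds (m j)
    have hhv : (hv m) j = halve (m j) := rfl
    rw [hhv] at h1
    have hs : (2:ℤ)^(k+1) = 2 * 2^k := by ring
    rw [hs]
    constructor
    · nlinarith [h1.1, h2.1]
    · nlinarith [h1.2, h2.2]

lemma hv_iter_zero (m : Fin d → ℤ) : hv^[Snorm m] m = 0 := by
  suffices H : ∀ n (m : Fin d → ℤ), Snorm m ≤ n → hv^[n] m = 0 by
    exact H _ m le_rfl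
  intro n
  induction n with
  | zero => intro m hm; exact Snorm_eq_zero (Nat.le_zero.1 hm)
  | succ n ih =>
    intro m hm
    rw [Function.iterate_succ_apply]
    apply ih
    rw [Snorm_le_iff]
    intro j
    show (halve (m j)).natAbs ≤ n
    rw [halve_natAbs]
    have := le_Snorm m j
    omega

noncomputable def W (m n : Fin d → ℤ) (i : Fin d) : ℤ :=
  ∑ k ∈ Finset.range (Snorm m), stair (hv^[k] m) (hv^[k+1] m) n i

lemma W_div (m n : Fin d → ℤ) :
    ∑ i, (W m (n - ee d i) i - W m n i)
      = (if n = m then 1 else 0) - (if n = 0 then 1 else 0) := by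
  unfold W
  calc ∑ i, (∑ k ∈ Finset.range (Snorm m), stair (hv^[k] m) (hv^[k+1] m) (n - ee d i) i
        - ∑ k ∈ Finset.range (Snorm m), stair (hv^[k] m) (hv^[k+1] m) n i)
      = ∑ i, ∑ k ∈ Finset.range (Snorm m),
          (stair (hv^[k] m) (hv^[k+1] m) (n - ee d i) i - stair (hv^[k] m) (hv^[k+1] m) n i) := by
        apply Finset.sum_congr rfl; intro i _; rw [Finset.sum_sub_distrib]
    _ = ∑ k ∈ Finset.range (Snorm m), ∑ i,
          (stair (hv^[k] m) (hv^[k+1] m) (n - ee d i) i - stair (hv^[k] m) (hv^[k+1] m) n i) :=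
        Finset.sum_comm
    _ = ∑ k ∈ Finset.range (Snorm m),
          ((if n = hv^[k] m then 1 else 0) - (if n = hv^[k+1] m then 1 else 0)) := by
        apply Finset.sum_congr rfl; intro k _; exact stair_div _ _ _
    _ = (if n = hv^[0] m then 1 else 0) - (if n = hv^[Snorm m] m then (1:ℤ) else 0) :=
        Finset.sum_range_sub' (fun k => if n = hv^[k] m then 1 else 0) (Snorm m)
    _ = _ := by rw [Function.iterate_zero_apply, hv_iter_zero]


def ctr (k : ℕ) (u : Fin d → ℤ) (i : Fin d) (j : Fin d) : ℤ :=
  if j < i then 2^(k+1) * u j else if j = i then 0 else 2^k * u j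

def rad (k : ℕ) (u : Fin d → ℤ) (i : Fin d) (j : Fin d) : ℤ :=
  if j < i then 2^(k+1) else if j = i then 2^(k+1) * ((u i).natAbs + 1) else 2^k

noncomputable def Box (k : ℕ) (u : Fin d → ℤ) (i : Fin d) : Finset (Fin d → ℤ) :=
  Fintype.piFinset fun j => Finset.Icc (ctr k u i j - rad k u i j) (ctr k u i j + rad k u i j)

lemma Box_card (hd : 0 < d) (k : ℕ) (u : Fin d → ℤ) (i : Fin d) :
    (Box k u i).card ≤ 2^((k+3)*d) * (Snorm u + 1) := by
  unfold Box
  rw [Fintype.card_piFinset]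
  have hfac : ∀ j : Fin d,
      (Finset.Icc (ctr k u i j - rad k u i j) (ctr k u i j + rad k u i j)).card
      = (2 * rad k u i j + 1).toNat := by
    intro j; rw [Int.card_Icc]; congr 1; ring
  have hi : (Finset.Icc (ctr k u i i - rad k u i i) (ctr k u i i + rad k u i i)).card
      ≤ 2^(k+3) * (Snorm u + 1) := by
    rw [hfac i]
    have hri : rad k u i i = 2^(k+1) * (((u i).natAbs : ℤ) + 1) := by
      unfold rad; rw [if_neg (lt_irrefl i), if_pos rfl]
    rw [hri]
    have h1 : (2 * ((2:ℤ)^(k+1) * (((u i).natAbs : ℤ) + 1)) + 1)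
        = ((2 * (2^(k+1) * ((u i).natAbs + 1)) + 1 : ℕ) : ℤ) := by push_cast; ring
    rw [h1, Int.toNat_natCast]
    have h2 := le_Snorm u i
    have hP : 1 ≤ 2^(k+1) := Nat.one_le_two_pow
    have h4 : (2:ℕ)^(k+3) = 4 * 2^(k+1) := by rw [pow_succ, pow_succ]; ring
    rw [h4]
    nlinarith
  have hne : ∀ j ∈ Finset.univ.erase i,
      (Finset.Icc (ctr k u i j - rad k u i j) (ctr k u i j + rad k u i j)).card ≤ 2^(k+3) := by
    intro j hj
    have hji : j ≠ i := (Finset.mem_erase.1 hj).1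
    rw [hfac j]
    have hr : rad k u i j ≤ 2^(k+1) := by
      unfold rad
      by_cases hlt : j < i
      · rw [if_pos hlt]
      · rw [if_neg hlt, if_neg hji]
        exact pow_le_pow_right₀ (by norm_num) (by omega)
    have hr0 : 0 ≤ rad k u i j := by
      unfold rad; split_ifs <;> positivity
    have e : ((2^(k+3) : ℕ) : ℤ) = 4 * 2^(k+1) := by push_cast; rw [pow_succ, pow_succ]; ring
    have hq : (0:ℤ) < 2^(k+1) := by positivity
    have : (2 * rad k u i j + 1) ≤ ((2^(k+3) : ℕ) : ℤ) := by rw [e]; linarith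
    omega
  calc ∏ j, (Finset.Icc (ctr k u i j - rad k u i j) (ctr k u i j + rad k u i j)).card
      = (Finset.Icc (ctr k u i i - rad k u i i) (ctr k u i i + rad k u i i)).card *
        ∏ j ∈ Finset.univ.erase i,
          (Finset.Icc (ctr k u i j - rad k u i j) (ctr k u i j + rad k u i j)).card := by
        exact (Finset.mul_prod_erase Finset.univ _ (Finset.mem_univ i)).symm
    _ ≤ (2^(k+3) * (Snorm u + 1)) * ∏ j ∈ Finset.univ.erase i, 2^(k+3) := by
        apply Nat.mul_le_mul hi
        exact Finset.prod_le_prod' hne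
    _ = (2^(k+3) * (Snorm u + 1)) * (2^(k+3))^(d-1) := by
        rw [Finset.prod_const, Finset.card_erase_of_mem (Finset.mem_univ i)]
        simp
    _ ≤ 2^((k+3)*d) * (Snorm u + 1) := by
        have h5 : 2^(k+3) * (2^(k+3))^(d-1) = 2^((k+3)*d) := by
          rw [← pow_succ', Nat.sub_add_cancel hd, ← pow_mul]
        exact le_of_eq (by rw [← h5]; ring)

lemma nat_div_lower {x c v : ℕ} (h : x / c = v) : c * v ≤ x := by
  subst h; rw [mul_comm]; exact Nat.div_mul_le_self x c

lemma nat_div_upper {x c v : ℕ} (hc : 0 < c) (h : x / c = v) : x < c * (v+1) := by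
  subst h
  have h1 := Nat.div_add_mod x c
  have h2 := Nat.mod_lt x hc
  nlinarith

lemma crossing {k : ℕ} {u m : Fin d → ℤ} {i : Fin d}
    (hs : stair (hv^[k] m) (hv^[k+1] m) u i ≠ 0) :
    m ∈ Box k u i ∧ (2^k ≤ Snorm m ∧ 2^k * Snorm u ≤ Snorm m)
      ∧ Snorm m ≤ 2^(k+1) * (Snorm u + 1) := by
  have hcond : ((∀ j, j < i → u j = hv^[k+1] m j) ∧ (∀ j, i < j → u j = hv^[k] m j))
      ∧ chi ((hv^[k+1] m) i) (u i) - chi ((hv^[k] m) i) (u i) ≠ 0 := by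
    unfold stair at hs
    by_cases h : (∀ j, j < i → u j = hv^[k+1] m j) ∧ (∀ j, i < j → u j = hv^[k] m j)
    · refine ⟨h, ?_⟩; rwa [if_pos h] at hs
    · rw [if_neg h] at hs; exact absurd rfl hs
  have hBA : (hv^[k+1] m) i = halve ((hv^[k] m) i) := by
    rw [Function.iterate_succ_apply']; rfl
  have hF3 : 1 ≤ ((hv^[k] m) i).natAbs ∧ (u i).natAbs ≤ ((hv^[k] m) i).natAbs
      ∧ ((hv^[k+1] m) i).natAbs ≤ (u i).natAbs := by
    have hb := halve_bounds ((hv^[k] m) i)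
    have hn := halve_natAbs ((hv^[k] m) i)
    rw [← hBA] at hb hn
    have hchi := hcond.2
    unfold chi at hchi
    split_ifs at hchi <;> omega
  have hA : ((hv^[k] m) i).natAbs = (m i).natAbs / 2^k := hv_iter_natAbs m k i
  have hB : ((hv^[k+1] m) i).natAbs = (m i).natAbs / 2^(k+1) := hv_iter_natAbs m (k+1) i
  have hpk : (0:ℕ) < 2^k := Nat.pow_pos (by norm_num)
  have hpk1 : (0:ℕ) < 2^(k+1) := Nat.pow_pos (by norm_num)
  -- coordinate i Nat bounds
  have hi_low : 2^k * max 1 (u i).natAbs ≤ (m i).natAbs := by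
    have h1 : 2^k * ((hv^[k] m) i).natAbs ≤ (m i).natAbs := nat_div_lower hA.symm
    have h2 : max 1 (u i).natAbs ≤ ((hv^[k] m) i).natAbs := max_le hF3.1 hF3.2.1
    calc 2^k * max 1 (u i).natAbs ≤ 2^k * ((hv^[k] m) i).natAbs := Nat.mul_le_mul_left _ h2
      _ ≤ _ := h1
  have hi_up : (m i).natAbs < 2^(k+1) * ((u i).natAbs + 1) := by
    have h1 : (m i).natAbs < 2^(k+1) * (((hv^[k+1] m) i).natAbs + 1) := nat_div_upper hpk1 hB.symm
    have h2 : ((hv^[k+1] m) i).natAbs + 1 ≤ (u i).natAbs + 1 := by omega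
    calc (m i).natAbs < 2^(k+1) * (((hv^[k+1] m) i).natAbs + 1) := h1
      _ ≤ 2^(k+1) * ((u i).natAbs + 1) := Nat.mul_le_mul_left _ h2
  -- off-coordinate Nat facts
  have hlt_nat : ∀ j, j < i → (u j).natAbs = (m j).natAbs / 2^(k+1) := by
    intro j hj; rw [hcond.1.1 j hj, hv_iter_natAbs]
  have hgt_nat : ∀ j, i < j → (u j).natAbs = (m j).natAbs / 2^k := by
    intro j hj; rw [hcond.1.2 j hj, hv_iter_natAbs]
  refine ⟨?_, ⟨?_, ?_⟩, ?_⟩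
  · -- box membership
    rw [Box, Fintype.mem_piFinset]
    intro j
    rw [Finset.mem_Icc]
    rcases lt_trichotomy j i with hj | hj | hj
    · have hc : ctr k u i j = 2^(k+1) * u j := by unfold ctr; rw [if_pos hj]
      have hrr : rad k u i j = 2^(k+1) := by unfold rad; rw [if_pos hj]
      have hb := hv_iter_bounds m (k+1) j
      rw [← hcond.1.1 j hj] at hb
      have hp : (0:ℤ) < 2^(k+1) := by positivity
      constructor
      · rw [hc, hrr]; linarith [hb.1]
      · rw [hc, hrr]; linarith [hb.2]
    · subst hj
      have hc : ctr k u j j = 0 := by unfold ctr; rw [if_neg (lt_irrefl j), if_pos rfl]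
      have hrr : rad k u j j = 2^(k+1) * (((u j).natAbs : ℤ) + 1) := by
        unfold rad; rw [if_neg (lt_irrefl j), if_pos rfl]
      have habs : ((m j).natAbs : ℤ) ≤ 2^(k+1) * (((u j).natAbs : ℤ) + 1) := by
        exact_mod_cast le_of_lt (by exact_mod_cast hi_up)
      have h1 : m j ≤ ((m j).natAbs : ℤ) := Int.le_natAbs
      have h2 : -((m j).natAbs : ℤ) ≤ m j := by
        rw [← Int.abs_eq_natAbs]; exact neg_abs_le _
      constructor
      · rw [hc, hrr]; linarith
      · rw [hc, hrr]; linarith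
    · have hc : ctr k u i j = 2^k * u j := by
        unfold ctr; rw [if_neg (by omega : ¬ j < i), if_neg (by omega : ¬ j = i)]
      have hrr : rad k u i j = 2^k := by
        unfold rad; rw [if_neg (by omega : ¬ j < i), if_neg (by omega : ¬ j = i)]
      have hb := hv_iter_bounds m k j
      rw [← hcond.1.2 j hj] at hb
      have hp : (0:ℤ) < 2^k := by positivity
      constructor
      · rw [hc, hrr]; linarith [hb.1]
      · rw [hc, hrr]; linarith [hb.2]
  · -- 2^k ≤ Snorm m
    calc 2^k = 2^k * 1 := by ring
      _ ≤ 2^k * max 1 (u i).natAbs := Nat.mul_le_mul_left _ (le_max_left _ _)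
      _ ≤ (m i).natAbs := hi_low
      _ ≤ Snorm m := le_Snorm m i
  · -- 2^k * Snorm u ≤ Snorm m
    obtain ⟨j₀, -, hj₀⟩ := Finset.exists_mem_eq_sup Finset.univ
      ⟨i, Finset.mem_univ i⟩ (fun j => (u j).natAbs)
    show 2^k * Snorm u ≤ Snorm m
    rw [show Snorm u = (u j₀).natAbs from hj₀]
    rcases lt_trichotomy j₀ i with hj | hj | hj
    · have h1 : 2^(k+1) * (u j₀).natAbs ≤ (m j₀).natAbs := nat_div_lower (hlt_nat j₀ hj).symm
      calc 2^k * (u j₀).natAbs ≤ 2^(k+1) * (u j₀).natAbs := by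
            exact Nat.mul_le_mul_right _ (Nat.pow_le_pow_right (by norm_num) (by omega))
        _ ≤ (m j₀).natAbs := h1
        _ ≤ Snorm m := le_Snorm m j₀
    · subst hj
      calc 2^k * (u j₀).natAbs ≤ 2^k * max 1 (u j₀).natAbs :=
            Nat.mul_le_mul_left _ (le_max_right _ _)
        _ ≤ (m j₀).natAbs := hi_low
        _ ≤ Snorm m := le_Snorm m j₀
    · have h1 : 2^k * (u j₀).natAbs ≤ (m j₀).natAbs := nat_div_lower (hgt_nat j₀ hj).symm
      exact le_trans h1 (le_Snorm m j₀)
  · -- Snorm m ≤ 2^(k+1) * (Snorm u + 1)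
    rw [Snorm_le_iff]
    intro j
    rcases lt_trichotomy j i with hj | hj | hj
    · have h1 : (m j).natAbs < 2^(k+1) * ((u j).natAbs + 1) := nat_div_upper hpk1 (hlt_nat j hj).symm
      have h2 : (u j).natAbs ≤ Snorm u := le_Snorm u j
      have := Nat.mul_le_mul_left (2^(k+1)) (by omega : (u j).natAbs + 1 ≤ Snorm u + 1)
      omega
    · subst hj
      have h2 : (u j).natAbs ≤ Snorm u := le_Snorm u j
      have := Nat.mul_le_mul_left (2^(k+1)) (by omega : (u j).natAbs + 1 ≤ Snorm u + 1)
      omega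
    · have h1 : (m j).natAbs < 2^k * ((u j).natAbs + 1) := nat_div_upper hpk (hgt_nat j hj).symm
      have h2 : (u j).natAbs ≤ Snorm u := le_Snorm u j
      have h3 : 2^k * ((u j).natAbs + 1) ≤ 2^(k+1) * (Snorm u + 1) :=
        Nat.mul_le_mul (Nat.pow_le_pow_right (by norm_num) (by omega)) (by omega)
      omega


-- ## analytic helpers

noncomputable def wt (m : Fin d → ℤ) : ℝ := (Snorm m : ℝ) + 2

lemma wt_two (m : Fin d → ℤ) : 2 ≤ wt m := by
  unfold wt; have : (0:ℝ) ≤ (Snorm m : ℝ) := Nat.cast_nonneg _; linarith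

lemma wt_pos (m : Fin d → ℤ) : 0 < wt m := lt_of_lt_of_le (by norm_num) (wt_two m)

lemma log_wt_pos (m : Fin d → ℤ) : 0 < Real.log (wt m) :=
  Real.log_pos (lt_of_lt_of_le (by norm_num) (wt_two m))

lemma log_comp {K a b : ℝ} (hK : 1 ≤ K) (ha : 2 ≤ a) (hb : 2 ≤ b)
    (hab : a ≤ K*b) (hba : b ≤ K*a) (α : ℝ) :
    Real.log a ^ α ≤ (1 + Real.log K / Real.log 2) ^ |α| * Real.log b ^ α := by
  have hlog2 : 0 < Real.log 2 := Real.log_pos (by norm_num)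
  have hKpos : (0:ℝ) < K := lt_of_lt_of_le one_pos hK
  have hlK : 0 ≤ Real.log K := Real.log_nonneg hK
  set c : ℝ := 1 + Real.log K / Real.log 2 with hc
  have hc1 : 1 ≤ c := by
    have : 0 ≤ Real.log K / Real.log 2 := div_nonneg hlK hlog2.le
    rw [hc]; linarith
  have hla : 0 < Real.log a := Real.log_pos (by linarith)
  have hlb : 0 < Real.log b := Real.log_pos (by linarith)
  have h2a : Real.log 2 ≤ Real.log a := Real.log_le_log (by norm_num) ha
  have h2b : Real.log 2 ≤ Real.log b := Real.log_le_log (by norm_num) hb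
  have key1 : Real.log a ≤ c * Real.log b := by
    have h1 : Real.log a ≤ Real.log K + Real.log b := by
      have := Real.log_le_log (by linarith : (0:ℝ) < a) hab
      rwa [Real.log_mul (ne_of_gt hKpos) (by linarith : b ≠ 0)] at this
    have h2 : Real.log K ≤ Real.log K / Real.log 2 * Real.log b := by
      rw [div_mul_eq_mul_div, le_div_iff₀ hlog2]
      exact mul_le_mul_of_nonneg_left h2b hlK
    calc Real.log a ≤ Real.log K + Real.log b := h1
      _ ≤ Real.log K / Real.log 2 * Real.log b + Real.log b := by linarith
      _ = c * Real.log b := by rw [hc]; ring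
  have key2 : Real.log b ≤ c * Real.log a := by
    have h1 : Real.log b ≤ Real.log K + Real.log a := by
      have := Real.log_le_log (by linarith : (0:ℝ) < b) hba
      rwa [Real.log_mul (ne_of_gt hKpos) (by linarith : a ≠ 0)] at this
    have h2 : Real.log K ≤ Real.log K / Real.log 2 * Real.log a := by
      rw [div_mul_eq_mul_div, le_div_iff₀ hlog2]
      exact mul_le_mul_of_nonneg_left h2a hlK
    calc Real.log b ≤ Real.log K + Real.log a := h1
      _ ≤ Real.log K / Real.log 2 * Real.log a + Real.log a := by linarith
      _ = c * Real.log a := by rw [hc]; ring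
  rcases le_or_gt 0 α with hα | hα
  · rw [abs_of_nonneg hα]
    calc Real.log a ^ α ≤ (c * Real.log b) ^ α := Real.rpow_le_rpow hla.le key1 hα
      _ = c ^ α * Real.log b ^ α := Real.mul_rpow (by linarith) hlb.le
  · rw [abs_of_neg hα]
    have hcpos : (0:ℝ) < c := by linarith
    have hcb : 0 < Real.log b / c := by positivity
    have h3 : Real.log b / c ≤ Real.log a := by
      rw [div_le_iff₀ hcpos]
      calc Real.log b ≤ c * Real.log a := key2
        _ = Real.log a * c := by ring
    calc Real.log a ^ α ≤ (Real.log b / c) ^ α :=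
          Real.rpow_le_rpow_of_nonpos hcb h3 hα.le
      _ = Real.log b ^ α * (c⁻¹) ^ α := by
          rw [div_eq_mul_inv, Real.mul_rpow hlb.le (by positivity)]
      _ = c ^ (-α) * Real.log b ^ α := by
          rw [Real.inv_rpow hcpos.le, ← Real.rpow_neg hcpos.le]; ring

set_option maxHeartbeats 1000000 in
lemma series_summable {r : ℝ} (hr0 : 0 < r) (hr1 : r < 1) (γ : ℝ) (hγ : 0 ≤ γ) :
    Summable (fun k : ℕ => ((k:ℝ)+6)^γ * r^k) := by
  set M := ⌈γ⌉₊ with hM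
  have base : Summable (fun k : ℕ => ((k:ℝ))^M * r^k) :=
    summable_pow_mul_geometric_of_norm_lt_one M (by rwa [Real.norm_eq_abs, abs_of_pos hr0])
  have shift : Summable (fun k : ℕ => (((k+1:ℕ)):ℝ)^M * r^(k+1)) :=
    (summable_nat_add_iff 1).2 base
  have shift2 : Summable (fun k : ℕ => ((k:ℝ)+1)^M * r^k) := by
    have h := shift.mul_left r⁻¹
    have he : (fun k : ℕ => r⁻¹ * ((((k+1:ℕ)):ℝ)^M * r^(k+1)))
        = fun k : ℕ => ((k:ℝ)+1)^M * r^k := by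
      funext k
      have hrne : r ≠ 0 := ne_of_gt hr0
      push_cast
      rw [pow_succ]
      field_simp
    rwa [he] at h
  apply Summable.of_nonneg_of_le (fun k => by positivity) (fun k => ?_) (shift2.mul_left (6^M))
  have hk0 : (0:ℝ) ≤ (k:ℝ) := Nat.cast_nonneg k
  have h1 : ((k:ℝ)+6)^γ ≤ ((k:ℝ)+6)^(M:ℝ) :=
    Real.rpow_le_rpow_of_exponent_le (by linarith) (Nat.le_ceil γ)
  have h2 : ((k:ℝ)+6)^(M:ℝ) = ((k:ℝ)+6)^M := Real.rpow_natCast _ M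
  have h3 : ((k:ℝ)+6)^M ≤ (6*((k:ℝ)+1))^M := pow_le_pow_left₀ (by positivity) (by linarith) M
  have h5 : ((k:ℝ)+6)^γ ≤ 6^M * ((k:ℝ)+1)^M := by
    rw [← mul_pow]
    exact le_trans (le_trans h1 (le_of_eq h2)) h3
  have hrk : (0:ℝ) ≤ r^k := by positivity
  calc ((k:ℝ)+6)^γ * r^k ≤ (6^M * ((k:ℝ)+1)^M) * r^k := mul_le_mul_of_nonneg_right h5 hrk
    _ = 6^M * (((k:ℝ)+1)^M * r^k) := by ring

lemma wt_lower {k : ℕ} {u m : Fin d → ℤ}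
    (h1 : 2^k ≤ Snorm m) (h2 : 2^k * Snorm u ≤ Snorm m) :
    (2:ℝ)^k * wt u ≤ 3 * wt m := by
  unfold wt
  have c1 : ((2^k : ℕ) : ℝ) ≤ (Snorm m : ℝ) := Nat.cast_le.2 h1
  have c2 : ((2^k * Snorm u : ℕ) : ℝ) ≤ (Snorm m : ℝ) := Nat.cast_le.2 h2
  push_cast at c1 c2
  nlinarith [Nat.cast_nonneg (α := ℝ) (Snorm u)]

lemma wt_upper {k : ℕ} {u m : Fin d → ℤ}
    (h3 : Snorm m ≤ 2^(k+1) * (Snorm u + 1)) :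
    wt m ≤ (2:ℝ)^(k+3) * wt u := by
  unfold wt
  have c3 : ((Snorm m : ℕ) : ℝ) ≤ ((2^(k+1) * (Snorm u + 1) : ℕ) : ℝ) := Nat.cast_le.2 h3
  push_cast at c3
  have hP : (1:ℝ) ≤ 2^k := one_le_pow₀ (by norm_num)
  have e1 : (2:ℝ)^(k+1) = 2*2^k := by rw [pow_succ]; ring
  have e3 : (2:ℝ)^(k+3) = 8*2^k := by rw [pow_succ, pow_succ, pow_succ]; ring
  rw [e1] at c3
  rw [e3]
  nlinarith [Nat.cast_nonneg (α := ℝ) (Snorm u)]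

set_option maxHeartbeats 1000000 in
lemma key (hd : 0 < d) {q α : ℝ} (hq : (d:ℝ) < q) :
    ∃ Cs : ℝ, 0 ≤ Cs ∧ ∀ (u : Fin d → ℤ) (i : Fin d) (Cf : ℝ), 0 ≤ Cf →
      (Summable fun m : Fin d → ℤ =>
        ((W m u i).natAbs : ℝ) * (Cf * wt m ^ (-q) * Real.log (wt m) ^ α)) ∧
      ∑' m : Fin d → ℤ, ((W m u i).natAbs : ℝ) * (Cf * wt m ^ (-q) * Real.log (wt m) ^ α)
        ≤ Cs * Cf * wt u ^ (1-q) * Real.log (wt u) ^ α := by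
  have hd1 : (1:ℝ) ≤ (d:ℝ) := by exact_mod_cast hd
  have h1q : 1 < q := lt_of_le_of_lt hd1 hq
  set r : ℝ := (2:ℝ) ^ ((d:ℝ) - q) with hrdef
  have hr0 : 0 < r := Real.rpow_pos_of_pos (by norm_num) _
  have hr1 : r < 1 := Real.rpow_lt_one_of_one_lt_of_neg (by norm_num) (by linarith)
  have hser : Summable (fun k : ℕ => ((k:ℝ)+6)^|α| * r^k) :=
    series_summable hr0 hr1 _ (abs_nonneg α)
  set Sser : ℝ := ∑' k : ℕ, ((k:ℝ)+6)^|α| * r^k with hSdef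
  have hSser : 0 ≤ Sser := tsum_nonneg (fun k => by positivity)
  refine ⟨2^(3*d) * 3^q * Sser, mul_nonneg (by positivity) hSser, ?_⟩
  intro u i Cf hCf
  have hwu : 0 < wt u := wt_pos u
  have hwu2 : 2 ≤ wt u := wt_two u
  set L0 : ℝ := Real.log (wt u) with hL0def
  have hL0 : 0 < L0 := log_wt_pos u
  set RHS : ℝ := (2^(3*d) * 3^q * Sser) * Cf * wt u ^ (1-q) * L0 ^ α with hRHSdef
  have hRHS0 : 0 ≤ RHS := by
    have h1 : (0:ℝ) ≤ wt u ^ (1-q) := (Real.rpow_pos_of_pos hwu _).le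
    have h2 : (0:ℝ) ≤ L0 ^ α := (Real.rpow_pos_of_pos hL0 _).le
    have h3 : (0:ℝ) ≤ (2:ℝ)^(3*d) * 3^q * Sser := by positivity
    exact mul_nonneg (mul_nonneg (mul_nonneg h3 hCf) h1) h2
  set ψ : ℕ → ℝ := fun k =>
    (2^(3*d) * 3^q * Cf * wt u ^ (1-q) * L0 ^ α) * (((k:ℝ)+6)^|α| * r^k) with hψdef
  have hψ0 : ∀ k, 0 ≤ ψ k := by
    intro k
    have h1 : (0:ℝ) ≤ wt u ^ (1-q) := (Real.rpow_pos_of_pos hwu _).le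
    have h2 : (0:ℝ) ≤ L0 ^ α := (Real.rpow_pos_of_pos hL0 _).le
    have h4 : (0:ℝ) ≤ ((k:ℝ)+6)^|α| * r^k := by positivity
    exact mul_nonneg (mul_nonneg (mul_nonneg (mul_nonneg (by positivity) hCf) h1) h2) h4
  have hψsum : Summable ψ := hser.mul_left _
  have hψtsum : ∑' k, ψ k = RHS := by
    rw [hψdef, tsum_mul_left, hRHSdef, ← hSdef]; ring
  set F : (Fin d → ℤ) → ℝ := fun m =>
    ((W m u i).natAbs : ℝ) * (Cf * wt m ^ (-q) * Real.log (wt m) ^ α) with hFdef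
  have hbet0 : ∀ m : Fin d → ℤ, 0 ≤ Cf * wt m ^ (-q) * Real.log (wt m) ^ α := by
    intro m
    have h1 : (0:ℝ) ≤ wt m ^ (-q) := (Real.rpow_pos_of_pos (wt_pos m) _).le
    have h2 : (0:ℝ) ≤ Real.log (wt m) ^ α := (Real.rpow_pos_of_pos (log_wt_pos m) _).le
    exact mul_nonneg (mul_nonneg hCf h1) h2
  have hF0 : ∀ m, 0 ≤ F m := fun m => mul_nonneg (Nat.cast_nonneg _) (hbet0 m)
  -- the per-scale sup bound
  set Bk : ℕ → ℝ := fun k =>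
    Cf * (((2:ℝ)^k)^(-q) * wt u^(-q) * 3^q) * (((k:ℝ)+6)^|α| * L0 ^ α) with hBkdef
  have hBk0 : ∀ k, 0 ≤ Bk k := by
    intro k
    have h1 : (0:ℝ) ≤ wt u ^ (-q) := (Real.rpow_pos_of_pos hwu _).le
    have h2 : (0:ℝ) ≤ L0 ^ α := (Real.rpow_pos_of_pos hL0 _).le
    have h3 : (0:ℝ) ≤ ((2:ℝ)^k)^(-q) := (Real.rpow_pos_of_pos (by positivity) _).le
    exact mul_nonneg (mul_nonneg hCf (by positivity)) (by positivity)
  have hbet : ∀ (k : ℕ) (m : Fin d → ℤ), 2^k ≤ Snorm m → 2^k * Snorm u ≤ Snorm m →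
      Snorm m ≤ 2^(k+1) * (Snorm u + 1) →
      Cf * wt m ^ (-q) * Real.log (wt m) ^ α ≤ Bk k := by
    intro k m hk1 hk2 hk3
    have hwm : 0 < wt m := wt_pos m
    have hwl : (2:ℝ)^k * wt u ≤ 3 * wt m := wt_lower hk1 hk2
    have hwup : wt m ≤ (2:ℝ)^(k+3) * wt u := wt_upper hk3
    have hPk : (1:ℝ) ≤ 2^k := one_le_pow₀ (by norm_num)
    have hP3 : (1:ℝ) ≤ 2^(k+3) := one_le_pow₀ (by norm_num)
    -- power part
    have hlow : (2:ℝ)^k * wt u / 3 ≤ wt m := by linarith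
    have hlow0 : (0:ℝ) < (2:ℝ)^k * wt u / 3 := by positivity
    have hp1 : wt m ^ (-q) ≤ ((2:ℝ)^k * wt u / 3)^(-q) :=
      Real.rpow_le_rpow_of_nonpos hlow0 hlow (by linarith)
    have hp2 : ((2:ℝ)^k * wt u / 3)^(-q) = ((2:ℝ)^k)^(-q) * wt u^(-q) * 3^q := by
      have h31 : ((3:ℝ)⁻¹)^(-q) = 3^q := by
        rw [Real.inv_rpow (by norm_num : (0:ℝ) ≤ 3), Real.rpow_neg (by norm_num : (0:ℝ) ≤ 3),
          inv_inv]
      rw [div_eq_mul_inv, Real.mul_rpow (by positivity) (by norm_num),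
        Real.mul_rpow (by positivity) hwu.le, h31]
    -- log part
    set K : ℝ := 3 * 2^(k+3) with hKdef
    have hK1 : (1:ℝ) ≤ K := by rw [hKdef]; nlinarith
    have habK : wt m ≤ K * wt u := by
      rw [hKdef]
      nlinarith
    have hbaK : wt u ≤ K * wt m := by
      have h4 : wt u ≤ (2:ℝ)^k * wt u := by nlinarith
      rw [hKdef]
      nlinarith
    have hlg : Real.log (wt m) ^ α ≤ (1 + Real.log K / Real.log 2)^|α| * L0 ^ α :=
      log_comp hK1 (wt_two m) (wt_two u) habK hbaK α
    have hcK : 1 + Real.log K / Real.log 2 ≤ (k:ℝ) + 6 := by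
      have hlog2 : 0 < Real.log 2 := Real.log_pos (by norm_num)
      have e1 : Real.log K = Real.log 3 + ((k:ℝ)+3) * Real.log 2 := by
        rw [hKdef, Real.log_mul (by norm_num) (by positivity), Real.log_pow]
        push_cast; ring
      have e2 : Real.log 3 ≤ 2 * Real.log 2 := by
        have h4 : Real.log 3 ≤ Real.log 4 := Real.log_le_log (by norm_num) (by norm_num)
        have h5 : Real.log 4 = 2 * Real.log 2 := by
          rw [show (4:ℝ) = 2^(2:ℕ) by norm_num, Real.log_pow]; push_cast; ring
        linarith
      rw [e1]
      have h6 : (Real.log 3 + ((k:ℝ)+3) * Real.log 2) / Real.log 2 ≤ (k:ℝ)+5 := by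
        rw [div_le_iff₀ hlog2]; nlinarith
      linarith
    have hlg2 : (1 + Real.log K / Real.log 2)^|α| ≤ ((k:ℝ)+6)^|α| := by
      have h0 : (0:ℝ) ≤ 1 + Real.log K / Real.log 2 := by
        have hlog2 : 0 < Real.log 2 := Real.log_pos (by norm_num)
        have := Real.log_nonneg hK1
        positivity
      exact Real.rpow_le_rpow h0 hcK (abs_nonneg α)
    have hlgfinal : Real.log (wt m) ^ α ≤ ((k:ℝ)+6)^|α| * L0 ^ α := by
      have h2 : (0:ℝ) ≤ L0 ^ α := (Real.rpow_pos_of_pos hL0 _).le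
      calc Real.log (wt m) ^ α ≤ (1 + Real.log K / Real.log 2)^|α| * L0 ^ α := hlg
        _ ≤ ((k:ℝ)+6)^|α| * L0 ^ α := mul_le_mul_of_nonneg_right hlg2 h2
    have hb1 : wt m ^ (-q) ≤ ((2:ℝ)^k)^(-q) * wt u^(-q) * 3^q := hp2 ▸ hp1
    rw [hBkdef]
    have hx1 : (0:ℝ) ≤ Real.log (wt m) ^ α := (Real.rpow_pos_of_pos (log_wt_pos m) _).le
    have hx2 : (0:ℝ) ≤ Cf * (((2:ℝ)^k)^(-q) * wt u^(-q) * 3^q) := by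
      have h1 : (0:ℝ) ≤ wt u ^ (-q) := (Real.rpow_pos_of_pos hwu _).le
      have h3 : (0:ℝ) ≤ ((2:ℝ)^k)^(-q) := (Real.rpow_pos_of_pos (by positivity) _).le
      exact mul_nonneg hCf (by positivity)
    exact mul_le_mul (mul_le_mul_of_nonneg_left hb1 hCf) hlgfinal hx1 hx2
  -- the count times sup bound
  have hNB : ∀ k : ℕ, ((2^((k+3)*d) * (Snorm u + 1) : ℕ) : ℝ) * Bk k ≤ ψ k := by
    intro k
    have hcast : ((2^((k+3)*d) * (Snorm u + 1) : ℕ) : ℝ)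
        = (2:ℝ)^((k+3)*d) * ((Snorm u : ℝ) + 1) := by push_cast; ring
    have hid : (2:ℝ)^((k+3)*d) * ((2:ℝ)^k)^(-q) = 2^(3*d) * r^k := by
      have e1 : (2:ℝ)^((k+3)*d) = ((2:ℝ)^k)^d * 2^(3*d) := by
        rw [show (k+3)*d = k*d + 3*d from by ring, pow_add, pow_mul]
      have e2 : ((2:ℝ)^k)^d * ((2:ℝ)^k)^(-q) = ((2:ℝ)^k)^((d:ℝ) - q) := by
        rw [← Real.rpow_natCast ((2:ℝ)^k) d, ← Real.rpow_add (by positivity)]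
        ring_nf
      have e3 : ((2:ℝ)^k)^((d:ℝ) - q) = r^k := by
        rw [hrdef, ← Real.rpow_natCast ((2:ℝ) ^ ((d:ℝ) - q)) k,
          ← Real.rpow_natCast (2:ℝ) k,
          ← Real.rpow_mul (by norm_num : (0:ℝ) ≤ 2),
          ← Real.rpow_mul (by norm_num : (0:ℝ) ≤ 2)]
        ring_nf
      rw [e1]
      calc ((2:ℝ)^k)^d * 2^(3*d) * ((2:ℝ)^k)^(-q)
          = (((2:ℝ)^k)^d * ((2:ℝ)^k)^(-q)) * 2^(3*d) := by ring
        _ = ((2:ℝ)^k)^((d:ℝ) - q) * 2^(3*d) := by rw [e2]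
        _ = 2^(3*d) * r^k := by rw [e3]; ring
    have hSu : ((Snorm u:ℝ)+1) ≤ wt u := by unfold wt; linarith
    have hwt1q : wt u * wt u^(-q) = wt u^(1-q) := by
      rw [show (1:ℝ)-q = 1 + (-q) from by ring, Real.rpow_add hwu, Real.rpow_one]
    have hD : (0:ℝ) ≤ Cf * wt u^(-q) * 3^q * ((k:ℝ)+6)^|α| * L0 ^ α := by
      have h1 : (0:ℝ) ≤ wt u ^ (-q) := (Real.rpow_pos_of_pos hwu _).le
      have h2 : (0:ℝ) ≤ L0 ^ α := (Real.rpow_pos_of_pos hL0 _).le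
      exact mul_nonneg (mul_nonneg (mul_nonneg (mul_nonneg hCf h1) (by positivity)) (by positivity)) h2
    have step1 : ((2^((k+3)*d) * (Snorm u + 1) : ℕ) : ℝ) * Bk k
        = (2^(3*d) * r^k) * (((Snorm u:ℝ)+1) * (Cf * wt u^(-q) * 3^q * ((k:ℝ)+6)^|α| * L0 ^ α)) := by
      rw [hcast, hBkdef]
      calc (2:ℝ)^((k+3)*d) * ((Snorm u : ℝ) + 1)
            * (Cf * (((2:ℝ)^k)^(-q) * wt u^(-q) * 3^q) * (((k:ℝ)+6)^|α| * L0 ^ α))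
          = ((2:ℝ)^((k+3)*d) * ((2:ℝ)^k)^(-q)) *
              (((Snorm u:ℝ)+1) * (Cf * wt u^(-q) * 3^q * ((k:ℝ)+6)^|α| * L0 ^ α)) := by ring
        _ = _ := by rw [hid]
    have step2 : (2^(3*d) * r^k) * (((Snorm u:ℝ)+1) * (Cf * wt u^(-q) * 3^q * ((k:ℝ)+6)^|α| * L0 ^ α))
        ≤ (2^(3*d) * r^k) * (wt u * (Cf * wt u^(-q) * 3^q * ((k:ℝ)+6)^|α| * L0 ^ α)) := by
      apply mul_le_mul_of_nonneg_left _ (by positivity : (0:ℝ) ≤ 2^(3*d) * r^k)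
      exact mul_le_mul_of_nonneg_right hSu hD
    have step3 : (2^(3*d) * r^k) * (wt u * (Cf * wt u^(-q) * 3^q * ((k:ℝ)+6)^|α| * L0 ^ α)) = ψ k := by
      rw [hψdef, ← hwt1q]; ring
    rw [step1]
    rw [← step3]
    exact step2
  -- ENNReal machinery
  have hkey : ∀ k : ℕ, (∑' m : Fin d → ℤ,
      (((stair (hv^[k] m) (hv^[k+1] m) u i).natAbs : ℝ≥0∞)
        * ENNReal.ofReal (Cf * wt m ^ (-q) * Real.log (wt m) ^ α)))
      ≤ ENNReal.ofReal (ψ k) := by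
    intro k
    have hpt : ∀ m : Fin d → ℤ,
        ((stair (hv^[k] m) (hv^[k+1] m) u i).natAbs : ℝ≥0∞)
          * ENNReal.ofReal (Cf * wt m ^ (-q) * Real.log (wt m) ^ α)
        ≤ Set.indicator (↑(Box k u i)) (fun _ => ENNReal.ofReal (Bk k)) m := by
      intro m
      by_cases hz : stair (hv^[k] m) (hv^[k+1] m) u i = 0
      · rw [hz]
        simp
      · obtain ⟨hbox, ⟨hk1, hk2⟩, hk3⟩ := crossing hz
        rw [Set.indicator_of_mem (Finset.mem_coe.2 hbox)]
        have h1 : ((stair (hv^[k] m) (hv^[k+1] m) u i).natAbs : ℝ≥0∞) ≤ 1 := by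
          exact_mod_cast Nat.cast_le.2 (stair_natAbs_le _ _ _ _)
        calc ((stair (hv^[k] m) (hv^[k+1] m) u i).natAbs : ℝ≥0∞)
              * ENNReal.ofReal (Cf * wt m ^ (-q) * Real.log (wt m) ^ α)
            ≤ 1 * ENNReal.ofReal (Cf * wt m ^ (-q) * Real.log (wt m) ^ α) :=
              mul_le_mul_left h1 _
          _ = ENNReal.ofReal (Cf * wt m ^ (-q) * Real.log (wt m) ^ α) := one_mul _
          _ ≤ ENNReal.ofReal (Bk k) := ENNReal.ofReal_le_ofReal (hbet k m hk1 hk2 hk3)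
    calc (∑' m : Fin d → ℤ,
        (((stair (hv^[k] m) (hv^[k+1] m) u i).natAbs : ℝ≥0∞)
          * ENNReal.ofReal (Cf * wt m ^ (-q) * Real.log (wt m) ^ α)))
        ≤ ∑' m : Fin d → ℤ,
            Set.indicator (↑(Box k u i)) (fun _ => ENNReal.ofReal (Bk k)) m :=
          ENNReal.tsum_le_tsum hpt
      _ = ∑ m ∈ Box k u i, Set.indicator (↑(Box k u i)) (fun _ => ENNReal.ofReal (Bk k)) m :=
          tsum_eq_sum (fun m hm => Set.indicator_of_notMem (by simpa using hm) _)
      _ = ∑ _m ∈ Box k u i, ENNReal.ofReal (Bk k) :=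
          Finset.sum_congr rfl (fun m hm => Set.indicator_of_mem (Finset.mem_coe.2 hm) _)
      _ = ((Box k u i).card : ℝ≥0∞) * ENNReal.ofReal (Bk k) := by
          rw [Finset.sum_const, nsmul_eq_mul]
      _ ≤ ((2^((k+3)*d) * (Snorm u + 1) : ℕ) : ℝ≥0∞) * ENNReal.ofReal (Bk k) :=
          mul_le_mul_left (by exact_mod_cast Nat.cast_le.2 (Box_card hd k u i)) _
      _ = ENNReal.ofReal (((2^((k+3)*d) * (Snorm u + 1) : ℕ) : ℝ)) * ENNReal.ofReal (Bk k) := by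
          rw [ENNReal.ofReal_natCast]
      _ = ENNReal.ofReal ((((2^((k+3)*d) * (Snorm u + 1) : ℕ)) : ℝ) * Bk k) :=
          (ENNReal.ofReal_mul (Nat.cast_nonneg _)).symm
      _ ≤ ENNReal.ofReal (ψ k) := ENNReal.ofReal_le_ofReal (hNB k)
  have hptw : ∀ m : Fin d → ℤ, ENNReal.ofReal (F m)
      ≤ ∑' k : ℕ, (((stair (hv^[k] m) (hv^[k+1] m) u i).natAbs : ℝ≥0∞)
          * ENNReal.ofReal (Cf * wt m ^ (-q) * Real.log (wt m) ^ α)) := by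
    intro m
    have e1 : ENNReal.ofReal (F m) = ((W m u i).natAbs : ℝ≥0∞)
        * ENNReal.ofReal (Cf * wt m ^ (-q) * Real.log (wt m) ^ α) := by
      rw [hFdef]
      rw [ENNReal.ofReal_mul (Nat.cast_nonneg _), ENNReal.ofReal_natCast]
    have hW : W m u i = ∑ k ∈ Finset.range (Snorm m), stair (hv^[k] m) (hv^[k+1] m) u i := rfl
    have e2 : ((W m u i).natAbs : ℝ≥0∞) ≤ ∑ k ∈ Finset.range (Snorm m),
        ((stair (hv^[k] m) (hv^[k+1] m) u i).natAbs : ℝ≥0∞) := by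
      have h2 : (W m u i).natAbs ≤ ∑ k ∈ Finset.range (Snorm m),
          (stair (hv^[k] m) (hv^[k+1] m) u i).natAbs := by
        rw [hW]
        exact nat_abs_sum_le (Finset.range (Snorm m))
          (fun k => stair (hv^[k] m) (hv^[k+1] m) u i)
      calc ((W m u i).natAbs : ℝ≥0∞)
          ≤ ((∑ k ∈ Finset.range (Snorm m),
              (stair (hv^[k] m) (hv^[k+1] m) u i).natAbs : ℕ) : ℝ≥0∞) := by
            exact_mod_cast h2
        _ = ∑ k ∈ Finset.range (Snorm m),
            ((stair (hv^[k] m) (hv^[k+1] m) u i).natAbs : ℝ≥0∞) := by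
            push_cast; rfl
    calc ENNReal.ofReal (F m)
        = ((W m u i).natAbs : ℝ≥0∞)
            * ENNReal.ofReal (Cf * wt m ^ (-q) * Real.log (wt m) ^ α) := e1
      _ ≤ (∑ k ∈ Finset.range (Snorm m),
            ((stair (hv^[k] m) (hv^[k+1] m) u i).natAbs : ℝ≥0∞))
            * ENNReal.ofReal (Cf * wt m ^ (-q) * Real.log (wt m) ^ α) :=
          mul_le_mul_left e2 _
      _ = ∑ k ∈ Finset.range (Snorm m),
            (((stair (hv^[k] m) (hv^[k+1] m) u i).natAbs : ℝ≥0∞)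
              * ENNReal.ofReal (Cf * wt m ^ (-q) * Real.log (wt m) ^ α)) :=
          Finset.sum_mul _ _ _
      _ ≤ ∑' k : ℕ, (((stair (hv^[k] m) (hv^[k+1] m) u i).natAbs : ℝ≥0∞)
            * ENNReal.ofReal (Cf * wt m ^ (-q) * Real.log (wt m) ^ α)) :=
          ENNReal.sum_le_tsum _
  have hglob : ∑' m : Fin d → ℤ, ENNReal.ofReal (F m) ≤ ENNReal.ofReal RHS := by
    calc ∑' m : Fin d → ℤ, ENNReal.ofReal (F m)
        ≤ ∑' (m : Fin d → ℤ) (k : ℕ), (((stair (hv^[k] m) (hv^[k+1] m) u i).natAbs : ℝ≥0∞)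
            * ENNReal.ofReal (Cf * wt m ^ (-q) * Real.log (wt m) ^ α)) :=
          ENNReal.tsum_le_tsum hptw
      _ = ∑' (k : ℕ) (m : Fin d → ℤ), (((stair (hv^[k] m) (hv^[k+1] m) u i).natAbs : ℝ≥0∞)
            * ENNReal.ofReal (Cf * wt m ^ (-q) * Real.log (wt m) ^ α)) := ENNReal.tsum_comm
      _ ≤ ∑' k : ℕ, ENNReal.ofReal (ψ k) := ENNReal.tsum_le_tsum hkey
      _ = ENNReal.ofReal (∑' k, ψ k) := (ENNReal.ofReal_tsum_of_nonneg hψ0 hψsum).symm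
      _ = ENNReal.ofReal RHS := by rw [hψtsum]
  have hsum : Summable F := by
    have hne : (∑' m : Fin d → ℤ, ENNReal.ofReal (F m)) ≠ ⊤ :=
      ne_top_of_le_ne_top ENNReal.ofReal_ne_top hglob
    have h2 := ENNReal.summable_toReal hne
    refine h2.congr (fun m => ?_)
    rw [ENNReal.toReal_ofReal (hF0 m)]
  constructor
  · exact hsum
  · have heq : ENNReal.ofReal (∑' m, F m) = ∑' m, ENNReal.ofReal (F m) :=
      ENNReal.ofReal_tsum_of_nonneg hF0 hsum
    have hle : ENNReal.ofReal (∑' m, F m) ≤ ENNReal.ofReal RHS := heq ▸ hglob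
    exact (ENNReal.ofReal_le_ofReal_iff hRHS0).1 hle


lemma abs_le_sqrt_sum {N : ℕ} (x : Fin N → ℝ) (l : Fin N) :
    |x l| ≤ Real.sqrt (∑ j, (x j)^2) := by
  rw [← Real.sqrt_sq_eq_abs]
  apply Real.sqrt_le_sqrt
  exact Finset.single_le_sum (fun j _ => sq_nonneg (x j)) (Finset.mem_univ l)

lemma sqrt_sum_le {N : ℕ} (x : Fin N → ℝ) {c : ℝ} (hc : 0 ≤ c)
    (h : ∀ l, |x l| ≤ c) :
    Real.sqrt (∑ j, (x j)^2) ≤ Real.sqrt N * c := by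
  have h1 : ∑ j, (x j)^2 ≤ (N:ℝ) * c^2 := by
    have h2 : ∀ j : Fin N, (x j)^2 ≤ c^2 := by
      intro j
      rw [← sq_abs]
      apply pow_le_pow_left₀ (abs_nonneg _) (h j)
    calc ∑ j, (x j)^2 ≤ ∑ _j : Fin N, c^2 := Finset.sum_le_sum (fun j _ => h2 j)
      _ = (N:ℝ) * c^2 := by
          rw [Finset.sum_const, Finset.card_univ, Fintype.card_fin, nsmul_eq_mul]
  calc Real.sqrt (∑ j, (x j)^2) ≤ Real.sqrt ((N:ℝ) * c^2) := Real.sqrt_le_sqrt h1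
    _ = Real.sqrt N * c := by
        rw [Real.sqrt_mul (Nat.cast_nonneg N), Real.sqrt_sq hc]

set_option maxHeartbeats 1000000 in
theorem core (hd : 0 < d) {N : ℕ} {q α : ℝ} (hq : (d:ℝ) < q) :
    ∃ Cs : ℝ, 0 ≤ Cs ∧ ∀ (Cf : ℝ), 0 ≤ Cf → ∀ (φ : (Fin d → ℤ) → Fin N → ℝ),
      (∀ m, Real.sqrt (∑ l, (φ m l)^2) ≤ Cf * wt m ^ (-q) * Real.log (wt m) ^ α) →
      HasSum φ 0 →
      ∃ g : (Fin d → ℤ) → Fin d → Fin N → ℝ,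
        (∀ u l, φ u l = ∑ i : Fin d, (g (u - ee d i) i l - g u i l)) ∧
        (∀ u i, Real.sqrt (∑ l, (g u i l)^2)
          ≤ Cs * Cf * wt u ^ (1-q) * Real.log (wt u) ^ α) := by
  obtain ⟨C0, hC00, hkey⟩ := key hd (α := α) hq
  refine ⟨Real.sqrt N * C0, mul_nonneg (Real.sqrt_nonneg _) hC00, ?_⟩
  intro Cf hCf φ hφ hsum0
  set bet : (Fin d → ℤ) → ℝ := fun m => Cf * wt m ^ (-q) * Real.log (wt m) ^ α with hbet
  have hbet0 : ∀ m, 0 ≤ bet m := by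
    intro m
    have h1 : (0:ℝ) ≤ wt m ^ (-q) := (Real.rpow_pos_of_pos (wt_pos m) _).le
    have h2 : (0:ℝ) ≤ Real.log (wt m) ^ α := (Real.rpow_pos_of_pos (log_wt_pos m) _).le
    exact mul_nonneg (mul_nonneg hCf h1) h2
  have hφl : ∀ m l, |φ m l| ≤ bet m := by
    intro m l
    exact le_trans (abs_le_sqrt_sum (φ m) l) (hφ m)
  have hmaj : ∀ u i, Summable (fun m : Fin d → ℤ => ((W m u i).natAbs : ℝ) * bet m) :=
    fun u i => (hkey u i Cf hCf).1
  have habs : ∀ (u : Fin d → ℤ) (i : Fin d) (l : Fin N) (m : Fin d → ℤ),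
      ‖((W m u i : ℝ)) * φ m l‖ ≤ ((W m u i).natAbs : ℝ) * bet m := by
    intro u i l m
    have h1 : |(W m u i : ℝ)| = ((W m u i).natAbs : ℝ) := by
      simp [Nat.cast_natAbs, Int.cast_abs]
    rw [Real.norm_eq_abs, abs_mul, h1]
    exact mul_le_mul_of_nonneg_left (hφl m l) (Nat.cast_nonneg _)
  have hsm : ∀ (u : Fin d → ℤ) (i : Fin d) (l : Fin N),
      Summable (fun m : Fin d → ℤ => ((W m u i : ℝ)) * φ m l) :=
    fun u i l => Summable.of_norm_bounded (hmaj u i) (habs u i l)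
  set g : (Fin d → ℤ) → Fin d → Fin N → ℝ :=
    fun u i l => ∑' m : Fin d → ℤ, ((W m u i : ℝ)) * φ m l with hg
  refine ⟨g, ?_, ?_⟩
  · -- divergence identity
    intro u l
    have hterm : ∀ i : Fin d,
        g (u - ee d i) i l - g u i l
          = ∑' m : Fin d → ℤ, (((W m (u - ee d i) i - W m u i : ℤ) : ℝ)) * φ m l := by
      intro i
      rw [hg]
      rw [← Summable.tsum_sub (hsm (u - ee d i) i l) (hsm u i l)]
      congr 1
      funext m
      push_cast
      ring
    have hsummand : ∀ i : Fin d,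
        Summable (fun m : Fin d → ℤ => (((W m (u - ee d i) i - W m u i : ℤ) : ℝ)) * φ m l) := by
      intro i
      have := ((hsm (u - ee d i) i l).sub (hsm u i l))
      refine this.congr (fun m => ?_)
      push_cast
      ring
    symm
    calc ∑ i : Fin d, (g (u - ee d i) i l - g u i l)
        = ∑ i : Fin d, ∑' m : Fin d → ℤ,
            (((W m (u - ee d i) i - W m u i : ℤ) : ℝ)) * φ m l :=
          Finset.sum_congr rfl (fun i _ => hterm i)
      _ = ∑' m : Fin d → ℤ, ∑ i : Fin d,
            (((W m (u - ee d i) i - W m u i : ℤ) : ℝ)) * φ m l :=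
          (Summable.tsum_finsetSum (fun i _ => hsummand i)).symm
      _ = ∑' m : Fin d → ℤ,
            (((if u = m then (1:ℝ) else 0) - (if u = 0 then (1:ℝ) else 0)) * φ m l) := by
          congr 1
          funext m
          rw [← Finset.sum_mul]
          congr 1
          have := W_div m u
          have hcast : ((∑ i : Fin d, (W m (u - ee d i) i - W m u i) : ℤ) : ℝ)
              = ((if u = m then (1:ℤ) else 0) - (if u = 0 then (1:ℤ) else 0) : ℤ) := by
            exact_mod_cast congrArg (Int.cast : ℤ → ℝ) this
          push_cast at hcast
          rw [← hcast]
          push_cast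
          rfl
      _ = φ u l := by
          have s1 : Summable (fun m : Fin d → ℤ => (if u = m then (1:ℝ) else 0) * φ m l) := by
            apply summable_of_ne_finset_zero (s := {u})
            intro b hb
            rw [if_neg, zero_mul]
            intro h
            exact hb (by simp [h])
          have s2 : Summable (fun m : Fin d → ℤ => (if u = 0 then (1:ℝ) else 0) * φ m l) := by
            by_cases h : u = 0
            · simp only [if_pos h, one_mul]
              exact (Pi.hasSum.1 hsum0 l).summable
            · simp only [if_neg h, zero_mul]
              exact summable_zero
          have e0 : ∑' m : Fin d → ℤ, φ m l = 0 := (Pi.hasSum.1 hsum0 l).tsum_eq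
          have e1 : ∑' m : Fin d → ℤ, (if u = m then (1:ℝ) else 0) * φ m l = φ u l := by
            rw [tsum_eq_single u]
            · rw [if_pos rfl, one_mul]
            · intro b hb
              rw [if_neg (fun h => hb (by simp [h])), zero_mul]
          have e2 : ∑' m : Fin d → ℤ, (if u = 0 then (1:ℝ) else 0) * φ m l = 0 := by
            by_cases h : u = 0
            · simp only [if_pos h, one_mul]
              exact e0
            · simp only [if_neg h, zero_mul, tsum_zero]
          calc ∑' m : Fin d → ℤ,
              (((if u = m then (1:ℝ) else 0) - (if u = 0 then (1:ℝ) else 0)) * φ m l)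
              = ∑' m : Fin d → ℤ, ((if u = m then (1:ℝ) else 0) * φ m l
                  - (if u = 0 then (1:ℝ) else 0) * φ m l) := by
                congr 1; funext m; ring
            _ = (∑' m : Fin d → ℤ, (if u = m then (1:ℝ) else 0) * φ m l)
                - ∑' m : Fin d → ℤ, (if u = 0 then (1:ℝ) else 0) * φ m l := Summable.tsum_sub s1 s2
            _ = φ u l := by rw [e1, e2, sub_zero]
  · -- bound
    intro u i
    have hT := (hkey u i Cf hCf).2
    have hT0 : 0 ≤ ∑' m : Fin d → ℤ, ((W m u i).natAbs : ℝ) * bet m :=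
      tsum_nonneg (fun m => mul_nonneg (Nat.cast_nonneg _) (hbet0 m))
    have hgl : ∀ l, |g u i l| ≤ ∑' m : Fin d → ℤ, ((W m u i).natAbs : ℝ) * bet m := by
      intro l
      rw [hg]
      calc |∑' m : Fin d → ℤ, ((W m u i : ℝ)) * φ m l|
          ≤ ∑' m : Fin d → ℤ, ‖((W m u i : ℝ)) * φ m l‖ := by
            rw [← Real.norm_eq_abs]
            apply norm_tsum_le_tsum_norm
            exact (hmaj u i).of_nonneg_of_le (fun m => norm_nonneg _) (habs u i l)
        _ ≤ ∑' m : Fin d → ℤ, ((W m u i).natAbs : ℝ) * bet m :=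
            Summable.tsum_le_tsum (habs u i l)
              ((hmaj u i).of_nonneg_of_le (fun m => norm_nonneg _) (habs u i l)) (hmaj u i)
    calc Real.sqrt (∑ l, (g u i l)^2)
        ≤ Real.sqrt N * (∑' m : Fin d → ℤ, ((W m u i).natAbs : ℝ) * bet m) :=
          sqrt_sum_le _ hT0 hgl
      _ ≤ Real.sqrt N * (C0 * Cf * wt u ^ (1-q) * Real.log (wt u) ^ α) :=
          mul_le_mul_of_nonneg_left hT (Real.sqrt_nonneg _)
      _ = (Real.sqrt N * C0) * Cf * wt u ^ (1-q) * Real.log (wt u) ^ α := by ring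


lemma transfer {K a b p β : ℝ} (hK : 1 ≤ K) (ha : 2 ≤ a) (hb : 2 ≤ b)
    (hab : a ≤ K*b) (hba : b ≤ K*a) (hp : p ≤ 0) :
    a ^ p * Real.log a ^ β
      ≤ (K^(-p) * (1 + Real.log K / Real.log 2)^|β|) * (b ^ p * Real.log b ^ β) := by
  have hKpos : (0:ℝ) < K := by linarith
  have hbpos : (0:ℝ) < b := by linarith
  have hapos : (0:ℝ) < a := by linarith
  have h1 : b / K ≤ a := by
    rw [div_le_iff₀ hKpos]
    calc b ≤ K * a := hba
      _ = a * K := by ring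
  have h2 : a ^ p ≤ (b / K) ^ p := Real.rpow_le_rpow_of_nonpos (by positivity) h1 hp
  have h3 : (b / K) ^ p = K^(-p) * b ^ p := by
    rw [div_eq_mul_inv, Real.mul_rpow hbpos.le (by positivity), Real.inv_rpow hKpos.le,
      ← Real.rpow_neg hKpos.le]
    ring
  have h4 := log_comp hK ha hb hab hba β
  have h5 : 0 ≤ Real.log a ^ β := (Real.rpow_pos_of_pos (Real.log_pos (by linarith)) _).le
  have h6 : 0 ≤ b ^ p := (Real.rpow_pos_of_pos hbpos _).le
  have h7 : 0 ≤ K^(-p) * b^p := mul_nonneg (Real.rpow_nonneg hKpos.le _) h6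
  calc a ^ p * Real.log a ^ β
      ≤ (K^(-p) * b ^ p) * ((1 + Real.log K / Real.log 2)^|β| * Real.log b ^ β) := by
        apply mul_le_mul (h3 ▸ h2) h4 h5 h7
    _ = (K^(-p) * (1 + Real.log K / Real.log 2)^|β|) * (b ^ p * Real.log b ^ β) := by ring

end DFAux

namespace Defect

section DFHelp

lemma DF_enorm_eq {n : ℕ} (v : Vec n) :
    enorm v = ‖(WithLp.equiv 2 (Fin n → ℝ)).symm v‖ := by
  rw [EuclideanSpace.norm_eq]
  unfold enorm
  congr 1
  apply Finset.sum_congr rfl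
  intro i _
  rw [Real.norm_eq_abs, sq_abs]; rfl

lemma DF_enorm_nonneg {n : ℕ} (v : Vec n) : 0 ≤ enorm v := Real.sqrt_nonneg _

lemma DF_enorm_smul {n : ℕ} (c : ℝ) (v : Vec n) : enorm (c • v) = |c| * enorm v := by
  rw [DF_enorm_eq, DF_enorm_eq]
  have h : (WithLp.equiv 2 (Fin n → ℝ)).symm (c • v)
      = c • (WithLp.equiv 2 (Fin n → ℝ)).symm v := rfl
  rw [h, norm_smul, Real.norm_eq_abs]

lemma DF_enorm_sum_le {n : ℕ} {ι : Type*} (t : Finset ι) (F : ι → Vec n) :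
    enorm (∑ i ∈ t, F i) ≤ ∑ i ∈ t, enorm (F i) := by
  set ι2 : (Fin n → ℝ) →+ EuclideanSpace ℝ (Fin n) :=
    AddMonoidHom.mk' (fun x => (WithLp.equiv 2 (Fin n → ℝ)).symm x) (fun a b => rfl) with hι
  calc enorm (∑ i ∈ t, F i) = ‖ι2 (∑ i ∈ t, F i)‖ := DF_enorm_eq _
    _ = ‖∑ i ∈ t, ι2 (F i)‖ := by rw [map_sum]
    _ ≤ ∑ i ∈ t, ‖ι2 (F i)‖ := norm_sum_le _ _
    _ = ∑ i ∈ t, enorm (F i) := Finset.sum_congr rfl (fun i _ => (DF_enorm_eq _).symm)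

lemma DF_norm_le_enorm {n : ℕ} (v : Vec n) : ‖v‖ ≤ enorm v := by
  rw [pi_norm_le_iff_of_nonneg (DF_enorm_nonneg v)]
  intro i
  rw [Real.norm_eq_abs]
  show |v i| ≤ Real.sqrt (∑ j, (v j)^2)
  exact DFAux.abs_le_sqrt_sum v i

end DFHelp

/-- Lemma: conversion to divergence form. -/
theorem conversion_to_divergence_form
    (d N : ℕ) (hd : 2 ≤ d)
    (A : Matrix (Fin d) (Fin d) ℝ) (hA : IsUnit A.det)
    (s : Fin d → Vec d) (hslat : ∀ i, s i ∈ Lattice d A)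
    (hsind : LinearIndependent ℝ s)
    (hsspan : ∀ x ∈ Lattice d A, ∃ z : Fin d → ℤ, x = ∑ i, (z i : ℝ) • s i)
    (α : ℝ) (q : ℝ) (hq : (d : ℝ) < q) :
    ∃ C : ℝ, ∀ (Cf : ℝ) (f : Vec d → Vec N),
      (∀ z : Fin d → ℤ,
        enorm (f (latticePt d A z)) ≤
          Cf * ang (latticePt d A z) ^ (-q) * Real.log (ang (latticePt d A z)) ^ α) →
      HasSum (fun z : Fin d → ℤ => f (latticePt d A z)) 0 →
      ∃ g : Vec d → Fin d → Vec N,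
        (∀ z : Fin d → ℤ,
          f (latticePt d A z) =
            ∑ i : Fin d, (g (latticePt d A z - s i) i - g (latticePt d A z) i)) ∧
        (∀ z : Fin d → ℤ,
          Real.sqrt (∑ i : Fin d, (enorm (g (latticePt d A z) i)) ^ 2) ≤
            C * Cf * ang (latticePt d A z) ^ (-q + 1) *
              Real.log (ang (latticePt d A z)) ^ α) := by
  classical
  have hd0 : 0 < d := by omega
  have hd1 : (1:ℝ) ≤ (d:ℝ) := by exact_mod_cast hd0
  have h1q : 1 < q := by linarith
  -- the map P
  set P : (Fin d → ℤ) → Vec d := fun u => ∑ i, ((u i : ℝ)) • s i with hP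
  have hPapp : ∀ (u : Fin d → ℤ) (a : Fin d), P u a = ∑ i, (u i : ℝ) * s i a := by
    intro u a
    show (∑ i, ((u i : ℝ)) • s i) a = _
    rw [Finset.sum_apply]
    apply Finset.sum_congr rfl
    intro i _
    rfl
  have hPinj : Function.Injective P := by
    intro u v huv
    have h0 : ∑ i, (((u i : ℝ) - (v i : ℝ)) • s i) = 0 := by
      rw [Finset.sum_congr rfl (fun i _ => sub_smul ((u i : ℝ)) ((v i : ℝ)) (s i)),
        Finset.sum_sub_distrib]
      change P u - P v = 0
      rw [huv, sub_self]
    have h1 := Fintype.linearIndependent_iff.1 hsind _ h0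
    funext j
    have h2 := h1 j
    have h3 : ((u j : ℝ)) = ((v j : ℝ)) := by linarith
    exact_mod_cast h3
  -- P u is a lattice point
  have hlatP : ∀ u : Fin d → ℤ, ∃ z, latticePt d A z = P u := by
    intro u
    choose ζ hζ using fun i => hslat i
    refine ⟨fun j => ∑ i, u i * ζ i j, ?_⟩
    funext a
    show ∑ j, A a j * ((∑ i, u i * ζ i j : ℤ) : ℝ) = P u a
    rw [hPapp]
    push_cast
    calc ∑ j, A a j * (∑ i, (u i:ℝ) * (ζ i j : ℝ))
        = ∑ j, ∑ i, (u i:ℝ) * (A a j * (ζ i j:ℝ)) := by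
          apply Finset.sum_congr rfl
          intro j _
          rw [Finset.mul_sum]
          apply Finset.sum_congr rfl
          intro i _
          ring
      _ = ∑ i, ∑ j, (u i:ℝ) * (A a j * (ζ i j:ℝ)) := Finset.sum_comm
      _ = ∑ i, (u i:ℝ) * (∑ j, A a j * (ζ i j:ℝ)) := by
          apply Finset.sum_congr rfl
          intro i _
          rw [← Finset.mul_sum]
      _ = ∑ i, (u i:ℝ) * s i a := by
          apply Finset.sum_congr rfl
          intro i _
          rw [show (∑ j, A a j * (ζ i j:ℝ)) = latticePt d A (ζ i) a from rfl, hζ i]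
  -- latticePt is injective
  have hlatinj : Function.Injective (latticePt d A) := by
    intro z z' hzz
    have hmv : ∀ w : Fin d → ℤ, latticePt d A w = A.mulVec (fun j => ((w j : ℤ) : ℝ)) := by
      intro w
      funext a
      rfl
    have hinv := Matrix.nonsing_inv_mul A hA
    have h1 : A.mulVec (fun j => ((z j : ℤ):ℝ)) = A.mulVec (fun j => ((z' j : ℤ):ℝ)) := by
      rw [← hmv, ← hmv]; exact hzz
    have h2 := congrArg (A⁻¹.mulVec) h1
    rw [Matrix.mulVec_mulVec, Matrix.mulVec_mulVec, hinv, Matrix.one_mulVec,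
      Matrix.one_mulVec] at h2
    funext j
    have h3 := congrFun h2 j
    exact_mod_cast h3
  -- coordinates of lattice points
  have hnEex : ∀ z : Fin d → ℤ, ∃ u : Fin d → ℤ, latticePt d A z = P u := by
    intro z
    obtain ⟨u, hu⟩ := hsspan (latticePt d A z) ⟨z, rfl⟩
    exact ⟨u, hu⟩
  choose nE hnE using hnEex
  have hnEinj : Function.Injective nE := fun z z' h => hlatinj (by rw [hnE z, hnE z', h])
  have hnEsurj : Function.Surjective nE := by
    intro u
    obtain ⟨z, hz⟩ := hlatP u
    exact ⟨z, hPinj (by rw [← hnE z, hz])⟩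
  set E : (Fin d → ℤ) ≃ (Fin d → ℤ) := Equiv.ofBijective nE ⟨hnEinj, hnEsurj⟩ with hE
  -- comparability constants
  set Cs0 : ℝ := ∑ i, enorm (s i) with hCs0
  have hCs00 : 0 ≤ Cs0 := Finset.sum_nonneg fun i _ => DF_enorm_nonneg _
  have hup : ∀ u : Fin d → ℤ, enorm (P u) ≤ Cs0 * (DFAux.Snorm u : ℝ) := by
    intro u
    calc enorm (P u) ≤ ∑ i, enorm ((u i : ℝ) • s i) := DF_enorm_sum_le _ _
      _ = ∑ i, |(u i:ℝ)| * enorm (s i) := Finset.sum_congr rfl (fun i _ => DF_enorm_smul _ _)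
      _ ≤ ∑ i, (DFAux.Snorm u : ℝ) * enorm (s i) := by
          apply Finset.sum_le_sum
          intro i _
          apply mul_le_mul_of_nonneg_right _ (DF_enorm_nonneg _)
          have e1 : |(u i:ℝ)| = (((u i).natAbs : ℕ) : ℝ) := by simp [Nat.cast_natAbs, Int.cast_abs]
          rw [e1]
          exact_mod_cast DFAux.le_Snorm u i
      _ = Cs0 * (DFAux.Snorm u:ℝ) := by rw [← Finset.mul_sum, ← hCs0]; ring
  -- lower comparability via inverse of the linear map
  set Smat : Matrix (Fin d) (Fin d) ℝ := Matrix.of (fun r i => s i r) with hSmat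
  set Lmap : (Fin d → ℝ) →ₗ[ℝ] (Fin d → ℝ) := Matrix.toLin' Smat with hLmap
  have hLapp : ∀ c : Fin d → ℝ, Lmap c = fun r => ∑ i, c i * s i r := by
    intro c
    funext rr
    rw [hLmap]
    show (Smat.mulVec c) rr = _
    show ∑ i, Smat rr i * c i = _
    apply Finset.sum_congr rfl
    intro i _
    show s i rr * c i = c i * s i rr
    ring
  have hsumL : ∀ x : Fin d → ℝ, ∑ i, x i • s i = Lmap x := by
    intro x
    rw [hLapp]
    funext a
    rw [Finset.sum_apply]
    apply Finset.sum_congr rfl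
    intro i _
    rfl
  have hLP : ∀ u : Fin d → ℤ, Lmap (fun i => ((u i : ℤ):ℝ)) = P u := by
    intro u
    rw [← hsumL]
  have hLinj : Function.Injective Lmap := by
    intro c c' hcc
    have h0 : ∑ i, ((c i - c' i) • s i) = 0 := by
      rw [Finset.sum_congr rfl (fun i _ => sub_smul (c i) (c' i) (s i)),
        Finset.sum_sub_distrib, hsumL, hsumL, hcc, sub_self]
    have h1 := Fintype.linearIndependent_iff.1 hsind _ h0
    funext i
    have h2 := h1 i
    linarith
  have hLsurj := LinearMap.injective_iff_surjective.1 hLinj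
  set Leq : (Fin d → ℝ) ≃ₗ[ℝ] (Fin d → ℝ) := LinearEquiv.ofBijective Lmap ⟨hLinj, hLsurj⟩
    with hLeq
  set Lcont := Leq.toContinuousLinearEquiv with hLcont
  set KK : ℝ := ‖(Lcont.symm : (Fin d → ℝ) →L[ℝ] (Fin d → ℝ))‖ with hKK
  have hKK0 : 0 ≤ KK := norm_nonneg _
  have hKKb : ∀ c : Fin d → ℝ, ‖c‖ ≤ KK * ‖Lmap c‖ := by
    intro c
    have hLc : Lcont c = Lmap c := rfl
    calc ‖c‖ = ‖Lcont.symm (Lcont c)‖ := by rw [Lcont.symm_apply_apply]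
      _ ≤ KK * ‖Lcont c‖ := by
          have h2 := (Lcont.symm : (Fin d → ℝ) →L[ℝ] (Fin d → ℝ)).le_opNorm (Lcont c)
          simpa using h2
      _ = KK * ‖Lmap c‖ := by rw [hLc]
  have hSnorm_le : ∀ u : Fin d → ℤ, (DFAux.Snorm u : ℝ) ≤ KK * enorm (P u) := by
    intro u
    have h1 : (DFAux.Snorm u : ℝ) ≤ ‖(fun i => ((u i : ℤ):ℝ))‖ := by
      obtain ⟨j₀, -, hj₀⟩ := Finset.exists_mem_eq_sup Finset.univ
        ⟨⟨0, hd0⟩, Finset.mem_univ _⟩ (fun j => (u j).natAbs)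
      rw [show DFAux.Snorm u = (u j₀).natAbs from hj₀]
      calc (((u j₀).natAbs : ℕ) : ℝ) = |(u j₀ : ℝ)| := by simp [Nat.cast_natAbs, Int.cast_abs]
        _ = ‖(fun i => ((u i : ℤ):ℝ)) j₀‖ := by rw [Real.norm_eq_abs]
        _ ≤ ‖(fun i => ((u i : ℤ):ℝ))‖ := norm_le_pi_norm (fun i => ((u i : ℤ):ℝ)) j₀
    calc (DFAux.Snorm u:ℝ) ≤ ‖(fun i => ((u i : ℤ):ℝ))‖ := h1
      _ ≤ KK * ‖Lmap (fun i => ((u i : ℤ):ℝ))‖ := hKKb _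
      _ = KK * ‖P u‖ := by rw [hLP]
      _ ≤ KK * enorm (P u) := mul_le_mul_of_nonneg_left (DF_norm_le_enorm _) hKK0
  -- combined comparability constant
  set K : ℝ := max (max Cs0 KK) 1 with hKdef
  have hK1 : (1:ℝ) ≤ K := le_max_right _ _
  have hKCs0 : Cs0 ≤ K := le_trans (le_max_left _ _) (le_max_left _ _)
  have hKKK : KK ≤ K := le_trans (le_max_right _ _) (le_max_left _ _)
  have hcomp : ∀ u : Fin d → ℤ,
      ang (P u) ≤ K * DFAux.wt u ∧ DFAux.wt u ≤ K * ang (P u) := by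
    intro u
    have h1 := hup u
    have h2 := hSnorm_le u
    have h3 : (0:ℝ) ≤ (DFAux.Snorm u : ℝ) := Nat.cast_nonneg _
    have h4 : 0 ≤ enorm (P u) := DF_enorm_nonneg _
    have h5 : Cs0 * (DFAux.Snorm u : ℝ) ≤ K * (DFAux.Snorm u : ℝ) :=
      mul_le_mul_of_nonneg_right hKCs0 h3
    have h6 : KK * enorm (P u) ≤ K * enorm (P u) := mul_le_mul_of_nonneg_right hKKK h4
    constructor
    · show enorm (P u) + 2 ≤ K * ((DFAux.Snorm u : ℝ) + 2)
      nlinarith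
    · show (DFAux.Snorm u : ℝ) + 2 ≤ K * (enorm (P u) + 2)
      nlinarith
  -- transfer constants
  set CL : ℝ := (1 + Real.log K / Real.log 2)^|α| with hCL
  set C1 : ℝ := K^q * CL with hC1
  set C2 : ℝ := K^(q-1) * CL with hC2
  have hCL0 : 0 ≤ CL := by
    rw [hCL]
    apply Real.rpow_nonneg
    have hlog2 : 0 < Real.log 2 := Real.log_pos (by norm_num)
    have := Real.log_nonneg hK1
    positivity
  have hC10 : 0 ≤ C1 := mul_nonneg (Real.rpow_nonneg (by linarith) _) hCL0
  have hC20 : 0 ≤ C2 := mul_nonneg (Real.rpow_nonneg (by linarith) _) hCL0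
  -- core construction
  obtain ⟨Cs, hCs0', hcore⟩ := DFAux.core hd0 (N := N) (α := α) hq
  refine ⟨Real.sqrt d * Cs * C1 * C2, ?_⟩
  intro Cf f hbound hHasSum
  have hCf : 0 ≤ Cf := by
    have h0 := hbound 0
    have hen : 0 ≤ enorm (f (latticePt d A 0)) := DF_enorm_nonneg _
    have hang : 2 ≤ ang (latticePt d A 0) := by
      unfold ang
      linarith [DF_enorm_nonneg (latticePt d A 0)]
    have hx1 : 0 < ang (latticePt d A 0) ^ (-q) := Real.rpow_pos_of_pos (by linarith) _
    have hx2 : 0 < Real.log (ang (latticePt d A 0)) ^ α :=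
      Real.rpow_pos_of_pos (Real.log_pos (by linarith)) _
    nlinarith [mul_pos hx1 hx2]
  set φ : (Fin d → ℤ) → Fin N → ℝ := fun u => f (P u) with hφ
  set Cf1 : ℝ := C1 * Cf with hCf1
  have hCf10 : 0 ≤ Cf1 := mul_nonneg hC10 hCf
  have hφb : ∀ u, Real.sqrt (∑ l, (φ u l)^2)
      ≤ Cf1 * DFAux.wt u ^ (-q) * Real.log (DFAux.wt u) ^ α := by
    intro u
    obtain ⟨z, hz⟩ := hlatP u
    have hb := hbound z
    rw [hz] at hb
    have hang2 : 2 ≤ ang (P u) := by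
      unfold ang
      linarith [DF_enorm_nonneg (P u)]
    have hwt2 : 2 ≤ DFAux.wt u := DFAux.wt_two u
    obtain ⟨hc1, hc2⟩ := hcomp u
    have htr := DFAux.transfer hK1 hang2 hwt2 hc1 hc2
      (show -q ≤ 0 by linarith) (β := α)
    rw [neg_neg] at htr
    calc Real.sqrt (∑ l, (φ u l)^2) = enorm (f (P u)) := rfl
      _ ≤ Cf * ang (P u) ^ (-q) * Real.log (ang (P u)) ^ α := hb
      _ = Cf * (ang (P u) ^ (-q) * Real.log (ang (P u)) ^ α) := by ring
      _ ≤ Cf * ((K^q * CL) * (DFAux.wt u ^ (-q) * Real.log (DFAux.wt u) ^ α)) :=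
          mul_le_mul_of_nonneg_left htr hCf
      _ = Cf1 * DFAux.wt u ^ (-q) * Real.log (DFAux.wt u) ^ α := by
          rw [hCf1, hC1]; ring
  have hcomp0 : (fun z : Fin d → ℤ => f (latticePt d A z)) = fun z => φ (nE z) := by
    funext z
    show f (latticePt d A z) = f (P (nE z))
    rw [hnE z]
  have hφsum : HasSum φ 0 := by
    have h := hHasSum
    rw [hcomp0] at h
    exact (Equiv.hasSum_iff E).1 h
  obtain ⟨g0, hgdiv, hgbd⟩ := hcore Cf1 hCf10 φ hφb hφsum
  set g : Vec d → Fin d → Vec N :=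
    fun x i => if h : ∃ u : Fin d → ℤ, P u = x then g0 h.choose i else 0 with hg
  have hgP : ∀ (u : Fin d → ℤ) (i : Fin d), g (P u) i = g0 u i := by
    intro u i
    rw [hg]
    simp only
    rw [dif_pos ⟨u, rfl⟩]
    have hch : (⟨u, rfl⟩ : ∃ v : Fin d → ℤ, P v = P u).choose = u :=
      hPinj ((⟨u, rfl⟩ : ∃ v : Fin d → ℤ, P v = P u).choose_spec)
    rw [hch]
  have hPe : ∀ i : Fin d, P (DFAux.ee d i) = s i := by
    intro i
    rw [hP]
    show ∑ j, (((Pi.single i 1 : Fin d → ℤ) j : ℤ) : ℝ) • s j = s i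
    rw [Finset.sum_eq_single i]
    · simp
    · intro j _ hji
      rw [Pi.single_eq_of_ne hji]
      simp
    · intro h
      exact absurd (Finset.mem_univ i) h
  have hPadd : ∀ (u v : Fin d → ℤ), P (u - v) = P u - P v := by
    intro u v
    rw [hP]
    simp only
    rw [← Finset.sum_sub_distrib]
    apply Finset.sum_congr rfl
    intro i _
    rw [show ((u - v) i : ℝ) = ((u i : ℝ) - (v i : ℝ)) by rw [Pi.sub_apply, Int.cast_sub],
      sub_smul]
  refine ⟨g, ?_, ?_⟩
  · intro z
    have hz1 : latticePt d A z = P (nE z) := hnE z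
    have hz2 : ∀ i : Fin d, latticePt d A z - s i = P (nE z - DFAux.ee d i) := by
      intro i
      rw [hPadd, hPe, hz1]
    funext l
    have hdiv := hgdiv (nE z) l
    calc f (latticePt d A z) l = φ (nE z) l := by
          show f (latticePt d A z) l = f (P (nE z)) l
          rw [hz1]
      _ = ∑ i, (g0 (nE z - DFAux.ee d i) i l - g0 (nE z) i l) := hdiv
      _ = (∑ i : Fin d, (g (latticePt d A z - s i) i - g (latticePt d A z) i)) l := by
          rw [Finset.sum_apply]
          apply Finset.sum_congr rfl
          intro i _
          rw [Pi.sub_apply]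
          rw [hz2 i, hz1, hgP, hgP]
  · intro z
    have hz1 : latticePt d A z = P (nE z) := hnE z
    have hg1 : ∀ i, g (latticePt d A z) i = g0 (nE z) i := by
      intro i
      rw [hz1, hgP]
    have hwtpos : 0 < DFAux.wt (nE z) := DFAux.wt_pos _
    have hlogpos : 0 < Real.log (DFAux.wt (nE z)) := DFAux.log_wt_pos _
    have hBu0 : 0 ≤ Cs * Cf1 * DFAux.wt (nE z) ^ (1-q) * Real.log (DFAux.wt (nE z)) ^ α := by
      have h1 : (0:ℝ) ≤ DFAux.wt (nE z) ^ (1-q) := (Real.rpow_pos_of_pos hwtpos _).le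
      have h2 : (0:ℝ) ≤ Real.log (DFAux.wt (nE z)) ^ α := (Real.rpow_pos_of_pos hlogpos _).le
      exact mul_nonneg (mul_nonneg (mul_nonneg hCs0' hCf10) h1) h2
    have h1 : Real.sqrt (∑ i, (enorm (g (latticePt d A z) i))^2)
        ≤ Real.sqrt d * (Cs * Cf1 * DFAux.wt (nE z) ^ (1-q) * Real.log (DFAux.wt (nE z)) ^ α) := by
      apply DFAux.sqrt_sum_le _ hBu0
      intro i
      rw [abs_of_nonneg (DF_enorm_nonneg _), hg1 i]
      exact hgbd (nE z) i
    have hang2 : 2 ≤ ang (P (nE z)) := by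
      unfold ang
      linarith [DF_enorm_nonneg (P (nE z))]
    obtain ⟨hc1, hc2⟩ := hcomp (nE z)
    have htr := DFAux.transfer hK1 (DFAux.wt_two (nE z)) hang2 hc2 hc1
      (show 1-q ≤ 0 by linarith) (β := α)
    rw [show -(1-q) = q-1 by ring] at htr
    have hfac0 : 0 ≤ Real.sqrt (d:ℝ) * Cs * Cf1 :=
      mul_nonneg (mul_nonneg (Real.sqrt_nonneg _) hCs0') hCf10
    rw [show -q + 1 = 1 - q by ring]
    calc Real.sqrt (∑ i, (enorm (g (latticePt d A z) i))^2)
        ≤ Real.sqrt d * (Cs * Cf1 * DFAux.wt (nE z) ^ (1-q) * Real.log (DFAux.wt (nE z)) ^ α) := h1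
      _ = (Real.sqrt d * Cs * Cf1)
            * (DFAux.wt (nE z) ^ (1-q) * Real.log (DFAux.wt (nE z)) ^ α) := by ring
      _ ≤ (Real.sqrt d * Cs * Cf1)
            * ((K^(q-1) * CL) * (ang (P (nE z)) ^ (1-q) * Real.log (ang (P (nE z))) ^ α)) :=
          mul_le_mul_of_nonneg_left htr hfac0
      _ = Real.sqrt d * Cs * C1 * C2 * Cf * ang (P (nE z)) ^ (1-q)
            * Real.log (ang (P (nE z))) ^ α := by
          rw [hCf1, hC1, hC2]; ring
      _ = Real.sqrt d * Cs * C1 * C2 * Cf * ang (latticePt d A z) ^ (1-q)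
            * Real.log (ang (latticePt d A z)) ^ α := by rw [hz1]


end Defect
end
end

section
/- (Moment matching by multipole fields.) Suppose the lattice operator H is stable and admits a lattice Green's function 𝒢. Let p ≥ 1, α ∈ ℕ₀, c > 0, let u ∈ 𝓗¹ satisfy |H[u](ℓ)| ≤ c⟨ℓ⟩^{−d−p}(log⟨ℓ⟩)^α for all ℓ (so the moments 𝓘_j[u] converge absolutely for j = 0,…,p−1), and let 𝒮 ⊂ Λ be a lattice basis. Then there exist unique symmetric arrays b^{(i,k)} ∈ (ℝ^𝒮)^{⊙i}, for i = 0,…,p−1 and k = 1,…,N, such that the function v_b := ∑_{i=0}^{p−1}∑_{k=1}^{N} b^{(i,k)} : D_𝒮^i 𝒢_k — whose linearized force field H[v_b] has compact support, so that all its moments are defined — satisfies 𝓘_j[v_b] = 𝓘_j[u] for all j = 0,…,p−1. -/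
noncomputable section

open scoped BigOperators
open MeasureTheory Filter Topology

namespace Defect

/-! ### Auxiliary lemmas -/

section Aux

variable {d N : ℕ}

lemma enorm_nonneg (v : Vec d) : 0 ≤ enorm v := Real.sqrt_nonneg _

lemma abs_apply_le_enorm (v : Vec d) (i : Fin d) : |v i| ≤ enorm v := by
  rw [enorm, ← Real.sqrt_sq_eq_abs]
  exact Real.sqrt_le_sqrt (Finset.single_le_sum (fun j _ => sq_nonneg (v j)) (Finset.mem_univ i))

lemma enorm_neg (v : Vec d) : enorm (-v) = enorm v := by
  simp [enorm]

lemma ang_ge_two (v : Vec d) : (2:ℝ) ≤ ang v := by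
  have := enorm_nonneg v; simp [ang]; linarith

lemma enorm_le_ang (v : Vec d) : enorm v ≤ ang v := by simp [ang]

lemma mnorm_nonneg (M : Fin d → Fin d → ℝ) : 0 ≤ mnorm M := Real.sqrt_nonneg _

lemma enorm_mulV_le (M : Fin d → Fin d → ℝ) (x : Vec d) :
    enorm (fun i => ∑ j, M i j * x j) ≤ mnorm M * enorm x := by
  rw [enorm, mnorm, enorm, ← Real.sqrt_mul (by positivity)]
  apply Real.sqrt_le_sqrt
  rw [Finset.sum_mul]
  apply Finset.sum_le_sum
  intro i _
  exact Finset.sum_mul_sq_le_sq_mul_sq Finset.univ (fun j => M i j) x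

lemma latticePt_add (A : Matrix (Fin d) (Fin d) ℝ) (z w : Fin d → ℤ) :
    latticePt d A (z + w) = latticePt d A z + latticePt d A w := by
  funext i
  simp [latticePt, ← Finset.sum_add_distrib, mul_add]

lemma latticePt_neg (A : Matrix (Fin d) (Fin d) ℝ) (z : Fin d → ℤ) :
    latticePt d A (-z) = -(latticePt d A z) := by
  funext i
  simp [latticePt, ← Finset.sum_neg_distrib]

lemma latticePt_zero (A : Matrix (Fin d) (Fin d) ℝ) :
    latticePt d A 0 = 0 := by
  funext i; simp [latticePt]

lemma latticePt_finsum {ι : Type*} (A : Matrix (Fin d) (Fin d) ℝ) (S : Finset ι)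
    (g : ι → (Fin d → ℤ)) :
    latticePt d A (∑ m ∈ S, g m) = ∑ m ∈ S, latticePt d A (g m) := by
  classical
  induction S using Finset.cons_induction with
  | empty => simp [latticePt_zero]
  | cons a s ha ih => rw [Finset.sum_cons, Finset.sum_cons, latticePt_add, ih]

lemma latticePt_eq_mulVec (A : Matrix (Fin d) (Fin d) ℝ) (z : Fin d → ℤ) :
    latticePt d A z = A.mulVec (fun j => (z j : ℝ)) := by
  funext i; rfl

lemma latticePt_injective {A : Matrix (Fin d) (Fin d) ℝ} (hA : IsUnit A.det) :
    Function.Injective (latticePt d A) := by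
  intro z w h
  have h2 : A.mulVec (fun j => (z j : ℝ)) = A.mulVec (fun j => (w j : ℝ)) := by
    rw [← latticePt_eq_mulVec, ← latticePt_eq_mulVec, h]
  have h3 : (fun j => (z j : ℝ)) = (fun j => (w j : ℝ)) := by
    have := congrArg (fun v => Matrix.mulVec A⁻¹ v) h2
    simpa [Matrix.mulVec_mulVec, Matrix.nonsing_inv_mul A hA, Matrix.one_mulVec] using this
  funext j
  exact_mod_cast congrFun h3 j


lemma D1_sum {ι : Type*} (T : Finset ι) (f : ι → Vec d → Vec N) (ρ y : Vec d) :
    D1 ρ (fun x => ∑ t ∈ T, f t x) y = ∑ t ∈ T, D1 ρ (f t) y := by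
  simp [D1, Finset.sum_sub_distrib]

lemma mulV_sum {ι : Type*} (T : Finset ι) (M : Fin N → Fin N → ℝ) (w : ι → Vec N) :
    mulV M (∑ t ∈ T, w t) = ∑ t ∈ T, mulV M (w t) := by
  funext i
  simp [mulV, Finset.sum_apply, Finset.mul_sum]
  rw [Finset.sum_comm]

lemma Hop_sum {ι : Type*} (R : Finset (Vec d)) (C : Vec d → Vec d → Fin N → Fin N → ℝ)
    (T : Finset ι) (f : ι → Vec d → Vec N) (ℓ : Vec d) :
    Hop d N R C (fun x => ∑ t ∈ T, f t x) ℓ = ∑ t ∈ T, Hop d N R C (f t) ℓ := by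
  unfold Hop
  have h : ∀ σ ρ : Vec d,
      mulV (C σ ρ) (D1 ρ (fun x => ∑ t ∈ T, f t x) (ℓ - σ)) -
        mulV (C σ ρ) (D1 ρ (fun x => ∑ t ∈ T, f t x) ℓ) =
      ∑ t ∈ T, (mulV (C σ ρ) (D1 ρ (f t) (ℓ - σ)) - mulV (C σ ρ) (D1 ρ (f t) ℓ)) := by
    intro σ ρ
    rw [D1_sum, D1_sum, mulV_sum, mulV_sum, Finset.sum_sub_distrib]
  simp only [h]
  rw [show (∑ σ ∈ R, ∑ ρ ∈ R, ∑ t ∈ T,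
      (mulV (C σ ρ) (D1 ρ (f t) (ℓ - σ)) - mulV (C σ ρ) (D1 ρ (f t) ℓ))) =
      ∑ σ ∈ R, ∑ t ∈ T, ∑ ρ ∈ R,
      (mulV (C σ ρ) (D1 ρ (f t) (ℓ - σ)) - mulV (C σ ρ) (D1 ρ (f t) ℓ)) from
    Finset.sum_congr rfl fun σ _ => Finset.sum_comm, Finset.sum_comm]

lemma D1_smul_shift (r : ℝ) (g : Vec d → Vec N) (v ρ y : Vec d) :
    D1 ρ (fun x => r • g (x + v)) y = r • D1 ρ g (y + v) := by
  simp only [D1, smul_sub]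
  congr 2
  rw [add_right_comm]

lemma mulV_smul (M : Fin N → Fin N → ℝ) (r : ℝ) (w : Vec N) :
    mulV M (r • w) = r • mulV M w := by
  funext i
  simp [mulV, Finset.mul_sum, Finset.smul_sum]
  apply Finset.sum_congr rfl
  intro j _; ring

lemma Hop_smul_shift (R : Finset (Vec d)) (C : Vec d → Vec d → Fin N → Fin N → ℝ)
    (r : ℝ) (g : Vec d → Vec N) (v ℓ : Vec d) :
    Hop d N R C (fun x => r • g (x + v)) ℓ = r • Hop d N R C g (ℓ + v) := by
  unfold Hop
  rw [Finset.smul_sum]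
  apply Finset.sum_congr rfl
  intro σ _
  rw [Finset.smul_sum]
  apply Finset.sum_congr rfl
  intro ρ _
  rw [D1_smul_shift, D1_smul_shift, mulV_smul, mulV_smul, smul_sub]
  congr 3
  · funext i; simp [sub_add_eq_add_sub]


/-! ### Combinatorial identities -/

lemma neg_one_pow_sub (r t : ℕ) (h : t ≤ r) :
    ((-1 : ℝ)) ^ (r - t) = (-1) ^ r * (-1) ^ t := by
  have : ((-1 : ℝ)) ^ (r - t) * ((-1) ^ t * (-1) ^ t) = (-1) ^ r * (-1) ^ t := by
    rw [← mul_assoc, ← pow_add, Nat.sub_add_cancel h]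
  simpa [← pow_add, ← two_mul, pow_mul] using this

lemma sum_powerset_neg_one_pow_card_real {α : Type*} [DecidableEq α] (x : Finset α) :
    (∑ m ∈ x.powerset, (-1 : ℝ) ^ m.card) = if x = ∅ then 1 else 0 := by
  have := Finset.sum_powerset_neg_one_pow_card (x := x)
  have h2 : ((∑ m ∈ x.powerset, (-1 : ℤ) ^ m.card : ℤ) : ℝ)
      = ∑ m ∈ x.powerset, (-1 : ℝ) ^ m.card := by push_cast; rfl
  rw [← h2, this]
  split <;> simp

lemma key_ie (n : ℕ) (F : Finset (Fin n)) :
    (∑ S : Finset (Fin n), if F ⊆ S then ((-1:ℝ) ^ (n - S.card)) else 0)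
      = if F = Finset.univ then 1 else 0 := by
  classical
  rw [Finset.sum_ite, Finset.sum_const_zero, add_zero]
  have hbij : (∑ S ∈ Finset.univ.filter (fun S => F ⊆ S), ((-1:ℝ) ^ (n - S.card)))
      = ∑ T ∈ Fᶜ.powerset, ((-1:ℝ) ^ (n - (F ∪ T).card)) := by
    refine Finset.sum_bij' (fun S _ => S \ F) (fun T _ => F ∪ T) ?_ ?_ ?_ ?_ ?_
    · intro S hS
      show S \ F ∈ Fᶜ.powerset
      rw [Finset.mem_powerset]
      intro x hx
      rw [Finset.mem_sdiff] at hx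
      simpa [Finset.mem_compl] using hx.2
    · intro T hT
      simp only [Finset.mem_filter, Finset.mem_univ, true_and]
      exact Finset.subset_union_left
    · intro S hS
      simp only [Finset.mem_filter, Finset.mem_univ, true_and] at hS
      show F ∪ S \ F = S
      exact Finset.union_sdiff_of_subset hS
    · intro T hT
      rw [Finset.mem_powerset] at hT
      show (F ∪ T) \ F = T
      rw [Finset.union_sdiff_cancel_left]
      exact (disjoint_compl_right : Disjoint F Fᶜ).mono_right hT
    · intro S hS
      simp only [Finset.mem_filter, Finset.mem_univ, true_and] at hS
      rw [Finset.union_sdiff_of_subset hS]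
  rw [hbij]
  have hcard : ∀ T ∈ Fᶜ.powerset, n - (F ∪ T).card = Fᶜ.card - T.card := by
    intro T hT
    rw [Finset.mem_powerset] at hT
    have hdisj : Disjoint F T := (disjoint_compl_right : Disjoint F Fᶜ).mono_right hT
    rw [Finset.card_union_of_disjoint hdisj, Finset.card_compl, Fintype.card_fin]
    omega
  rw [Finset.sum_congr rfl (fun T hT => by rw [hcard T hT])]
  have hle : ∀ T ∈ Fᶜ.powerset, T.card ≤ Fᶜ.card := fun T hT =>
    Finset.card_le_card (Finset.mem_powerset.mp hT)
  rw [Finset.sum_congr rfl (fun T hT => neg_one_pow_sub _ _ (hle T hT)),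
    ← Finset.mul_sum, sum_powerset_neg_one_pow_card_real]
  by_cases h : F = Finset.univ
  · simp [h]
  · have : Fᶜ ≠ ∅ := by
      intro hc
      exact h (by simpa [Finset.compl_eq_empty_iff] using hc)
    simp [h, this, Finset.compl_eq_empty_iff]

/-- Image of `g` is `univ` iff `g` surjective (Finset form). -/
lemma image_univ_eq_univ_iff {α β : Type*} [Fintype α] [Fintype β] [DecidableEq β]
    (g : α → β) : Finset.univ.image g = Finset.univ ↔ Function.Surjective g := by
  constructor
  · intro h y
    have : y ∈ Finset.univ.image g := by rw [h]; exact Finset.mem_univ y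
    obtain ⟨x, _, hx⟩ := Finset.mem_image.mp this
    exact ⟨x, hx⟩
  · intro h
    apply Finset.eq_univ_of_forall
    intro y
    obtain ⟨x, hx⟩ := h y
    exact Finset.mem_image.mpr ⟨x, Finset.mem_univ x, hx⟩

/-- Core inclusion–exclusion expansion. -/
lemma ie_main (n j : ℕ) (c : Fin j → Fin n → ℝ) :
    (∑ S : Finset (Fin n), (-1:ℝ) ^ (n - S.card) * ∏ m, (∑ m' ∈ S, c m m'))
      = ∑ g : Fin j → Fin n,
          (if Function.Surjective g then (1:ℝ) else 0) * ∏ m, c m (g m) := by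
  classical
  have hexp : ∀ S : Finset (Fin n),
      (∏ m, (∑ m' ∈ S, c m m'))
        = ∑ g : Fin j → Fin n, (if ∀ m, g m ∈ S then (1:ℝ) else 0) * ∏ m, c m (g m) := by
    intro S
    rw [Finset.prod_univ_sum]
    simp only [ite_mul, one_mul, zero_mul, ← Finset.sum_filter]
    congr 1
    ext g
    simp [Fintype.mem_piFinset]
  calc (∑ S : Finset (Fin n), (-1:ℝ) ^ (n - S.card) * ∏ m, (∑ m' ∈ S, c m m'))
      = ∑ S : Finset (Fin n), ∑ g : Fin j → Fin n,
          ((if ∀ m, g m ∈ S then (-1:ℝ) ^ (n - S.card) else 0) * ∏ m, c m (g m)) := by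
        apply Finset.sum_congr rfl
        intro S _
        rw [hexp S, Finset.mul_sum]
        apply Finset.sum_congr rfl
        intro g _
        rw [← mul_assoc, mul_ite, mul_one, mul_zero]
    _ = ∑ g : Fin j → Fin n, (∑ S : Finset (Fin n),
          if ∀ m, g m ∈ S then (-1:ℝ) ^ (n - S.card) else 0) * ∏ m, c m (g m) := by
        rw [Finset.sum_comm]
        apply Finset.sum_congr rfl
        intro g _
        rw [Finset.sum_mul]
    _ = _ := by
        apply Finset.sum_congr rfl
        intro g _
        congr 1
        have hcond : ∀ S : Finset (Fin n), (∀ m, g m ∈ S) ↔ Finset.univ.image g ⊆ S := by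
          intro S
          rw [Finset.image_subset_iff]
          constructor
          · intro h m _; exact h m
          · intro h m; exact h m (Finset.mem_univ m)
        rw [Finset.sum_congr rfl (fun S _ => by rw [if_congr (hcond S) rfl rfl]), key_ie,
          if_congr (image_univ_eq_univ_iff g) rfl rfl]

lemma surjective_sum_eq_perm_sum (n : ℕ) (w : (Fin n → Fin n) → ℝ) :
    (∑ g : Fin n → Fin n, (if Function.Surjective g then (1:ℝ) else 0) * w g)
      = ∑ π : Equiv.Perm (Fin n), w ⇑π := by
  classical
  simp only [ite_mul, one_mul, zero_mul, ← Finset.sum_filter]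
  symm
  refine Finset.sum_bij (fun π _ => ⇑π)
    (fun π _ => by simp [Finset.mem_filter, π.surjective]) ?_ ?_ ?_
  · intro π₁ _ π₂ _ h
    exact Equiv.coe_fn_injective h
  · intro g _
    by_cases hg : Function.Surjective g
    · have hbij : Function.Bijective g := Finite.surjective_iff_bijective.mp hg
      exact ⟨Equiv.ofBijective g hbij, Finset.mem_univ _, rfl⟩
    · rename_i hgmem
      rw [Finset.mem_filter] at hgmem
      exact absurd hgmem.2 hg
  · intro π _
    have : Function.Surjective ⇑π := π.surjective
    simp [this]


/-! ### Kronecker powers -/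

/-- Action of the `j`-fold Kronecker power of a matrix on arrays. -/
def kron (d j : ℕ) (M : Matrix (Fin d) (Fin d) ℝ) (f : (Fin j → Fin d) → ℝ) :
    (Fin j → Fin d) → ℝ :=
  fun js => ∑ σv : Fin j → Fin d, (∏ m, M (js m) (σv m)) * f σv

lemma prod_ite_eq_fun {j : ℕ} (x y : Fin j → Fin d) :
    (∏ m, if x m = y m then (1:ℝ) else 0) = if x = y then 1 else 0 := by
  by_cases h : x = y
  · simp [h]
  · have : ∃ m, x m ≠ y m := by
      by_contra hc
      push_neg at hc
      exact h (funext hc)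
    obtain ⟨m, hm⟩ := this
    rw [if_neg h]
    exact Finset.prod_eq_zero (Finset.mem_univ m) (by simp [hm])

lemma kron_kron {j : ℕ} (M P : Matrix (Fin d) (Fin d) ℝ) (h : M * P = 1)
    (f : (Fin j → Fin d) → ℝ) : kron d j M (kron d j P f) = f := by
  funext js
  unfold kron
  calc (∑ σv : Fin j → Fin d, (∏ m, M (js m) (σv m)) *
          ∑ τ : Fin j → Fin d, (∏ m, P (σv m) (τ m)) * f τ)
      = ∑ σv : Fin j → Fin d, ∑ τ : Fin j → Fin d,
          (∏ m, M (js m) (σv m) * P (σv m) (τ m)) * f τ := by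
        apply Finset.sum_congr rfl; intro σv _
        rw [Finset.mul_sum]
        apply Finset.sum_congr rfl; intro τ _
        rw [← mul_assoc, ← Finset.prod_mul_distrib]
    _ = ∑ τ : Fin j → Fin d, (∏ m, ∑ σ : Fin d, M (js m) σ * P σ (τ m)) * f τ := by
        rw [Finset.sum_comm]
        apply Finset.sum_congr rfl; intro τ _
        rw [← Finset.sum_mul]
        congr 1
        rw [Finset.prod_univ_sum (fun _ => Finset.univ)
          (fun m σ => M (js m) σ * P σ (τ m))]
        rw [Fintype.piFinset_univ]
    _ = ∑ τ : Fin j → Fin d, (if js = τ then (1:ℝ) else 0) * f τ := by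
        apply Finset.sum_congr rfl; intro τ _
        congr 1
        have : ∀ m : Fin j, (∑ σ : Fin d, M (js m) σ * P σ (τ m)) = if js m = τ m then 1 else 0 := by
          intro m
          have := congrFun (congrFun h (js m)) (τ m)
          simpa [Matrix.mul_apply, Matrix.one_apply] using this
        rw [Finset.prod_congr rfl (fun m _ => this m), prod_ite_eq_fun]
    _ = f js := by
        simp [ite_mul, zero_mul, one_mul]

/-- Precomposition by a permutation as an equivalence on arrays. -/
def permEquiv {j : ℕ} (π : Equiv.Perm (Fin j)) : (Fin j → Fin d) ≃ (Fin j → Fin d) :=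
  Equiv.arrowCongr π (Equiv.refl (Fin d))

lemma permEquiv_apply {j : ℕ} (π : Equiv.Perm (Fin j)) (f : Fin j → Fin d) :
    permEquiv π f = f ∘ ⇑π.symm := rfl

lemma kron_symm {j : ℕ} (M : Matrix (Fin d) (Fin d) ℝ) (f : (Fin j → Fin d) → ℝ)
    (hf : SymArr f) : SymArr (kron d j M f) := by
  intro π js
  unfold kron
  rw [← Equiv.sum_comp (permEquiv π) (fun σv => (∏ m, M (js m) (σv m)) * f σv)]
  apply Finset.sum_congr rfl
  intro σv _
  rw [permEquiv_apply]
  congr 1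
  · rw [← Equiv.prod_comp π (fun m => M (js m) ((σv ∘ ⇑π.symm) m))]
    apply Finset.prod_congr rfl
    intro m _
    simp [Function.comp]
  · have := hf π.symm σv
    rwa [eq_comm] at this


/-! ### Moment polynomial of iterated-difference deltas -/

/-- `∑_{m∈S} s_{σv(m)}`. -/
def ysum {d : ℕ} (s : Fin d → Vec d) {n : ℕ} (σv : Fin n → Fin d) (S : Finset (Fin n)) :
    Vec d := ∑ m ∈ S, s (σv m)

/-- `j`-th moment of the iterated-difference delta with legs `σv`. -/
def Pterm {d : ℕ} (s : Fin d → Vec d) (j n : ℕ) (σv : Fin n → Fin d)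
    (js : Fin j → Fin d) : ℝ :=
  ∑ S : Finset (Fin n), (-1:ℝ) ^ (n - S.card) * ∏ m, (-(ysum s σv S)) (js m)

lemma Pterm_eq_ie {j n : ℕ} (s : Fin d → Vec d) (σv : Fin n → Fin d) (js : Fin j → Fin d) :
    Pterm s j n σv js = (-1:ℝ) ^ j *
      ∑ g : Fin j → Fin n, (if Function.Surjective g then (1:ℝ) else 0) *
        ∏ m, s (σv (g m)) (js m) := by
  unfold Pterm
  have h1 : ∀ S : Finset (Fin n), (∏ m, (-(ysum s σv S)) (js m))
      = (-1:ℝ)^j * ∏ m, (∑ m' ∈ S, s (σv m') (js m)) := by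
    intro S
    have : ∀ m : Fin j, (-(ysum s σv S)) (js m) = (-1:ℝ) * (∑ m' ∈ S, s (σv m') (js m)) := by
      intro m
      simp [ysum, Finset.sum_apply]
    rw [Finset.prod_congr rfl (fun m _ => this m), Finset.prod_mul_distrib]
    simp
  rw [Finset.sum_congr rfl (fun S _ => by rw [h1 S])]
  rw [show (∑ S : Finset (Fin n), (-1:ℝ) ^ (n - S.card) *
      ((-1:ℝ)^j * ∏ m, (∑ m' ∈ S, s (σv m') (js m))))
      = (-1:ℝ)^j * ∑ S : Finset (Fin n), (-1:ℝ) ^ (n - S.card) *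
        ∏ m, (∑ m' ∈ S, s (σv m') (js m)) by
    rw [Finset.mul_sum]; apply Finset.sum_congr rfl; intro S _; ring]
  rw [ie_main n j (fun m m' => s (σv m') (js m))]

lemma Pterm_eq_zero {j n : ℕ} (s : Fin d → Vec d) (σv : Fin n → Fin d)
    (js : Fin j → Fin d) (h : j < n) : Pterm s j n σv js = 0 := by
  rw [Pterm_eq_ie]
  have : ∀ g : Fin j → Fin n, ¬ Function.Surjective g := by
    intro g hg
    have := Fintype.card_le_of_surjective g hg
    simp only [Fintype.card_fin] at this
    omega
  rw [Finset.sum_congr rfl (fun g _ => by rw [if_neg (this g)])]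
  simp

lemma Pterm_diag {n : ℕ} (s : Fin d → Vec d) (σv : Fin n → Fin d) (js : Fin n → Fin d) :
    Pterm s n n σv js = (-1:ℝ)^n * ∑ π : Equiv.Perm (Fin n), ∏ m, s (σv (π m)) (js m) := by
  rw [Pterm_eq_ie]
  congr 1
  exact surjective_sum_eq_perm_sum n (fun g => ∏ m, s (σv (g m)) (js m))

lemma Pterm_symm {j n : ℕ} (s : Fin d → Vec d) (σv : Fin n → Fin d)
    (js : Fin j → Fin d) (π : Equiv.Perm (Fin j)) :
    Pterm s j n σv (js ∘ ⇑π) = Pterm s j n σv js := by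
  unfold Pterm
  apply Finset.sum_congr rfl
  intro S _
  congr 1
  exact Equiv.prod_comp π (fun m => (-(ysum s σv S)) (js m))

/-- The matrix with columns `s i`. -/
def Smat {d : ℕ} (s : Fin d → Vec d) : Matrix (Fin d) (Fin d) ℝ :=
  Matrix.of (fun r c => s c r)

lemma Pterm_diag_sym {n : ℕ} (s : Fin d → Vec d) (b : (Fin n → Fin d) → ℝ)
    (hb : SymArr b) (js : Fin n → Fin d) :
    (∑ σv : Fin n → Fin d, b σv * Pterm s n n σv js)
      = (-1:ℝ)^n * (n.factorial : ℝ) * kron d n (Smat s) b js := by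
  have h1 : ∀ σv, b σv * Pterm s n n σv js
      = (-1:ℝ)^n * ∑ π : Equiv.Perm (Fin n), b σv * ∏ m, s (σv (π m)) (js m) := by
    intro σv
    rw [Pterm_diag, mul_left_comm, Finset.mul_sum]
  rw [Finset.sum_congr rfl (fun σv _ => h1 σv), ← Finset.mul_sum, Finset.sum_comm]
  rw [mul_assoc]
  congr 1
  have h2 : ∀ π : Equiv.Perm (Fin n),
      (∑ σv : Fin n → Fin d, b σv * ∏ m, s (σv (π m)) (js m))
        = kron d n (Smat s) b js := by
    intro π
    rw [← Equiv.sum_comp (permEquiv π) (fun σv => b σv * ∏ m, s (σv (π m)) (js m))]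
    unfold kron
    apply Finset.sum_congr rfl
    intro σv _
    rw [permEquiv_apply]
    rw [mul_comm]
    congr 1
    · apply Finset.prod_congr rfl
      intro m _
      simp [Smat, Function.comp]
    · exact hb π.symm σv
  rw [Finset.sum_congr rfl (fun π _ => h2 π), Finset.sum_const, Finset.card_univ,
    Fintype.card_perm, Fintype.card_fin, nsmul_eq_mul]


/-! ### Summability -/

lemma summable_prod_int {n : ℕ} (h : ℤ → ℝ) (hs : Summable h) (hnn : ∀ k, 0 ≤ h k) :
    Summable (fun z : Fin n → ℤ => ∏ i, h (z i)) := by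
  induction n with
  | zero => exact Summable.of_finite
  | succ n ih =>
    have hmul : Summable (fun x : ℤ × (Fin n → ℤ) => h x.1 * ∏ i, h (x.2 i)) :=
      Summable.mul_of_nonneg (f := h) (g := fun z : Fin n → ℤ => ∏ i, h (z i)) hs ih
        (fun k => hnn k) (fun z => Finset.prod_nonneg (fun i _ => hnn _))
    have hinj : Function.Injective
        (fun z : Fin (n+1) → ℤ => ((z 0, fun i : Fin n => z i.succ) : ℤ × (Fin n → ℤ))) := by
      intro z w hzw
      simp only [Prod.mk.injEq] at hzw
      funext i
      cases i using Fin.cases with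
      | zero => exact hzw.1
      | succ i => exact congrFun hzw.2 i
    have := hmul.comp_injective hinj
    apply this.congr
    intro z
    simp only [Function.comp]
    rw [Fin.prod_univ_succ]

lemma summable_one_add_abs_int (t : ℝ) (ht : 1 < t) :
    Summable (fun k : ℤ => (1 + |(k:ℝ)|) ^ (-t)) := by
  refine Summable.of_nonneg_of_le (g := fun k : ℤ => (1 + |(k:ℝ)|) ^ (-t))
    (f := fun k : ℤ => (if k = 0 then (1:ℝ) else 0) + |(k:ℝ)| ^ (-t))
    (fun k => Real.rpow_nonneg (by positivity) _) ?_ ?_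
  · intro k
    by_cases hk : k = 0
    · subst hk
      simp [Real.zero_rpow (by linarith : -t ≠ 0)]
    · have h1 : (1:ℝ) ≤ |(k:ℝ)| := by
        have : (1:ℤ) ≤ |k| := Int.one_le_abs hk
        calc (1:ℝ) ≤ ((|k| : ℤ) : ℝ) := by exact_mod_cast this
        _ = |(k:ℝ)| := by push_cast; ring
      show (1 + |(k:ℝ)|) ^ (-t) ≤ (if k = 0 then (1:ℝ) else 0) + |(k:ℝ)| ^ (-t)
      rw [if_neg hk]
      have : (1 + |(k:ℝ)|) ^ (-t) ≤ |(k:ℝ)| ^ (-t) := by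
        apply Real.rpow_le_rpow_of_nonpos (by linarith) (by linarith) (by linarith)
      linarith
  · exact Summable.add (summable_of_ne_finset_zero (s := {0}) (by intro k hk; simp at hk; simp [hk]))
      (Real.summable_abs_int_rpow ht)

set_option maxHeartbeats 1000000 in
lemma summable_ang_decay {d : ℕ} (hd : 0 < d) (A : Matrix (Fin d) (Fin d) ℝ)
    (hA : IsUnit A.det) (t : ℝ) (ht : (d:ℝ) < t) :
    Summable (fun z : Fin d → ℤ => ang (latticePt d A z) ^ (-t)) := by
  set M := mnorm (A⁻¹ : Matrix (Fin d) (Fin d) ℝ) with hM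
  have hM0 : 0 ≤ M := mnorm_nonneg _
  set K : ℝ := 1/2 + M with hK
  have hK0 : 0 < K := by positivity
  -- coordinate bound : 1 + |z i| ≤ K * ang (A z)
  have hcoord : ∀ (z : Fin d → ℤ) (i : Fin d),
      (1 + |(z i : ℝ)|) ≤ K * ang (latticePt d A z) := by
    intro z i
    have h1 : |(z i : ℝ)| ≤ enorm (fun j => ((z j : ℝ))) := abs_apply_le_enorm (fun j => ((z j : ℝ))) i
    have h2 : enorm (fun j => ((z j : ℝ))) ≤ M * enorm (latticePt d A z) := by
      have hrec : (fun j => ((z j : ℝ)))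
          = fun i => ∑ j, (A⁻¹ : Matrix (Fin d) (Fin d) ℝ) i j * (latticePt d A z) j := by
        have := congrArg (fun v => (A⁻¹ : Matrix (Fin d) (Fin d) ℝ).mulVec v)
          (latticePt_eq_mulVec A z)
        simp only [Matrix.mulVec_mulVec, Matrix.nonsing_inv_mul A hA, Matrix.one_mulVec] at this
        funext i
        calc ((z i : ℝ)) = A⁻¹.mulVec (latticePt d A z) i := (congrFun this i).symm
          _ = ∑ j, A⁻¹ i j * latticePt d A z j := by
              simp [Matrix.mulVec, dotProduct]
      rw [hrec]
      exact enorm_mulV_le _ _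
    have h3 : enorm (latticePt d A z) ≤ ang (latticePt d A z) := enorm_le_ang _
    have h4 : (2:ℝ) ≤ ang (latticePt d A z) := ang_ge_two _
    have h5 : 0 ≤ enorm (latticePt d A z) := enorm_nonneg _
    calc (1 + |(z i : ℝ)|) ≤ 1 + M * ang (latticePt d A z) := by
          have := le_trans h1 (le_trans h2 (mul_le_mul_of_nonneg_left h3 hM0))
          linarith
      _ ≤ K * ang (latticePt d A z) := by rw [hK]; nlinarith
  have hang2 : ∀ z : Fin d → ℤ, (2:ℝ) ≤ ang (latticePt d A z) := fun z => ang_ge_two _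
  -- comparison function
  set td : ℝ := t / d with htd
  have htd1 : 1 < td := by
    rw [htd, lt_div_iff₀ (by exact_mod_cast hd)]
    linarith
  have hcomp : ∀ z : Fin d → ℤ, ang (latticePt d A z) ^ (-t)
      ≤ (K ^ d) ^ (td) * ∏ i, (1 + |(z i : ℝ)|) ^ (-td) := by
    intro z
    set a : ℝ := ang (latticePt d A z) with ha
    have ha2 : (2:ℝ) ≤ a := hang2 z
    have ha0 : 0 < a := by linarith
    have hprodle : (∏ i, (1 + |(z i : ℝ)|)) ≤ K ^ d * a ^ d := by
      calc (∏ i, (1 + |(z i : ℝ)|)) ≤ ∏ _i : Fin d, (K * a) := by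
            apply Finset.prod_le_prod (fun i _ => by positivity) (fun i _ => hcoord z i)
        _ = (K * a) ^ d := by rw [Finset.prod_const, Finset.card_univ, Fintype.card_fin]
        _ = K ^ d * a ^ d := mul_pow _ _ _
    have hd0 : (d:ℝ) ≠ 0 := by exact_mod_cast hd.ne'
    have key : a ^ (-t) = (a ^ (d:ℝ)) ^ (-td) := by
      rw [← Real.rpow_mul (le_of_lt ha0)]
      congr 1
      rw [htd]; field_simp
    rw [key]
    have hstep : (a ^ (d:ℝ)) ^ (-td) ≤ ((K^d)⁻¹ * ∏ i, (1 + |(z i : ℝ)|)) ^ (-td) := by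
      apply Real.rpow_le_rpow_of_nonpos
      · positivity
      · rw [Real.rpow_natCast]
        rw [inv_mul_le_iff₀ (by positivity)]
        linarith [hprodle]
      · linarith
    refine le_trans hstep (le_of_eq ?_)
    rw [Real.mul_rpow (by positivity) (by positivity)]
    congr 1
    · rw [Real.inv_rpow (by positivity), ← Real.rpow_neg (by positivity), neg_neg]
    · rw [← Real.finset_prod_rpow _ _ (fun i _ => by positivity)]
  refine Summable.of_nonneg_of_le
    (g := fun z : Fin d → ℤ => ang (latticePt d A z) ^ (-t))
    (f := fun z : Fin d → ℤ => (K ^ d) ^ td * ∏ i, (1 + |(z i : ℝ)|) ^ (-td))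
    (fun z => Real.rpow_nonneg (by linarith [hang2 z]) _) hcomp ?_
  exact Summable.mul_left _ (summable_prod_int (fun k : ℤ => (1 + |(k:ℝ)|) ^ (-td))
    (summable_one_add_abs_int td htd1) (fun k => Real.rpow_nonneg (by positivity) _))


lemma log_pow_le_rpow_half (α : ℕ) (t : ℝ) (ht : 2 ≤ t) :
    Real.log t ^ α ≤ (max 1 ((2*(α:ℝ))^α)) * t ^ ((1:ℝ)/2) := by
  have ht0 : (0:ℝ) < t := by linarith
  have ht1 : (1:ℝ) ≤ t := by linarith
  have hrp1 : (1:ℝ) ≤ t ^ ((1:ℝ)/2) := Real.one_le_rpow ht1 (by norm_num)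
  rcases Nat.eq_zero_or_pos α with hα | hα
  · subst hα
    simpa using le_trans hrp1 (by nlinarith [le_max_left (1:ℝ) ((2*(0:ℝ):ℝ)^0)])
  · have hα0 : (0:ℝ) < (α:ℝ) := by exact_mod_cast hα
    set ε : ℝ := 1/(2*(α:ℝ)) with hε
    have hε0 : 0 < ε := by positivity
    have hlog : Real.log t ≤ 2*(α:ℝ) * t ^ ε := by
      have := Real.log_le_rpow_div (le_of_lt ht0) hε0
      calc Real.log t ≤ t ^ ε / ε := this
        _ = 2*(α:ℝ) * t ^ ε := by rw [hε]; field_simp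
    have hlog0 : 0 ≤ Real.log t := Real.log_nonneg ht1
    have hpow : Real.log t ^ α ≤ (2*(α:ℝ) * t ^ ε) ^ α :=
      pow_le_pow_left₀ hlog0 hlog α
    have heq : (2*(α:ℝ) * t ^ ε) ^ α = (2*(α:ℝ))^α * t ^ ((1:ℝ)/2) := by
      rw [mul_pow]
      congr 1
      rw [← Real.rpow_natCast (t ^ ε) α, ← Real.rpow_mul (le_of_lt ht0)]
      congr 1
      rw [hε]
      field_simp
    calc Real.log t ^ α ≤ (2*(α:ℝ))^α * t ^ ((1:ℝ)/2) := by rw [← heq]; exact hpow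
      _ ≤ (max 1 ((2*(α:ℝ))^α)) * t ^ ((1:ℝ)/2) := by
          apply mul_le_mul_of_nonneg_right (le_max_right _ _) (by linarith)

lemma moment_summable {d N : ℕ} (hd : 2 ≤ d) (A : Matrix (Fin d) (Fin d) ℝ)
    (hA : IsUnit A.det) (R : Finset (Vec d)) (C : Vec d → Vec d → Fin N → Fin N → ℝ)
    (u : Vec d → Vec N) (p : ℕ) (α : ℕ) (c : ℝ) (hc : 0 < c)
    (hbound : ∀ z : Fin d → ℤ,
      enorm (Hop d N R C u (latticePt d A z)) ≤
        c * ang (latticePt d A z) ^ (-(d : ℝ) - p) *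
          Real.log (ang (latticePt d A z)) ^ α)
    (j : ℕ) (hj : j < p) (a : Fin N) (js : Fin j → Fin d) :
    Summable (fun z : Fin d → ℤ =>
      Hop d N R C u (latticePt d A z) a * ∏ m, latticePt d A z (js m)) := by
  set Kα : ℝ := max 1 ((2*(α:ℝ))^α) with hKα
  have hKα0 : 0 < Kα := lt_of_lt_of_le one_pos (le_max_left _ _)
  rw [← summable_abs_iff]
  have hbig : ∀ z : Fin d → ℤ,
      |Hop d N R C u (latticePt d A z) a * ∏ m, latticePt d A z (js m)|
        ≤ (c * Kα) * ang (latticePt d A z) ^ (-((d:ℝ) + 1/2)) := by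
    intro z
    set L := latticePt d A z with hL
    have hang2 : (2:ℝ) ≤ ang L := ang_ge_two _
    have hang0 : (0:ℝ) < ang L := by linarith
    have h1 : |Hop d N R C u L a| ≤ enorm (Hop d N R C u L) := abs_apply_le_enorm _ a
    have h2 : |∏ m, L (js m)| ≤ ang L ^ (j:ℝ) := by
      rw [Finset.abs_prod]
      have : ∀ m ∈ Finset.univ, |L (js m)| ≤ ang L := fun m _ =>
        le_trans (abs_apply_le_enorm L (js m)) (enorm_le_ang L)
      calc (∏ m, |L (js m)|) ≤ ∏ _m : Fin j, ang L :=
            Finset.prod_le_prod (fun m _ => abs_nonneg _) this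
        _ = ang L ^ (j:ℝ) := by
            rw [Finset.prod_const, Finset.card_univ, Fintype.card_fin, Real.rpow_natCast]
    have hlog : Real.log (ang L) ^ α ≤ Kα * ang L ^ ((1:ℝ)/2) :=
      log_pow_le_rpow_half α (ang L) hang2
    have hlog0 : (0:ℝ) ≤ Real.log (ang L) ^ α :=
      pow_nonneg (Real.log_nonneg (by linarith)) _
    have hrp : ∀ e : ℝ, (0:ℝ) ≤ ang L ^ e := fun e => Real.rpow_nonneg (le_of_lt hang0) _
    calc |Hop d N R C u L a * ∏ m, L (js m)|
        = |Hop d N R C u L a| * |∏ m, L (js m)| := abs_mul _ _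
      _ ≤ (c * ang L ^ (-(d : ℝ) - p) * Real.log (ang L) ^ α) * (ang L ^ (j:ℝ)) := by
          apply mul_le_mul (le_trans h1 (hbound z)) h2 (abs_nonneg _)
          have := hrp (-(d : ℝ) - p)
          positivity
      _ ≤ (c * ang L ^ (-(d : ℝ) - p) * (Kα * ang L ^ ((1:ℝ)/2))) * (ang L ^ (j:ℝ)) := by
          apply mul_le_mul_of_nonneg_right _ (hrp _)
          apply mul_le_mul_of_nonneg_left hlog _
          have := hrp (-(d : ℝ) - p)
          positivity
      _ = (c * Kα) * ang L ^ ((-(d : ℝ) - p) + (1:ℝ)/2 + (j:ℝ)) := by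
          rw [Real.rpow_add hang0, Real.rpow_add hang0]
          ring
      _ ≤ (c * Kα) * ang L ^ (-((d:ℝ) + 1/2)) := by
          apply mul_le_mul_of_nonneg_left _ (by positivity)
          apply Real.rpow_le_rpow_of_exponent_le (by linarith)
          have : (j:ℝ) + 1 ≤ (p:ℝ) := by exact_mod_cast hj
          linarith
  refine Summable.of_nonneg_of_le (fun z => abs_nonneg _) hbig ?_
  exact Summable.mul_left _ (summable_ang_decay (by omega) A hA ((d:ℝ) + 1/2) (by linarith))


/-! ### Hop of multipole fields -/

lemma Dmulti_smul_eq {j : ℕ} (b : ℝ) (ρs : Fin j → Vec d) (f : Vec d → Vec N) :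
    (fun ℓ => b • Dmulti ρs f ℓ)
      = fun ℓ => ∑ S : Finset (Fin j),
          (b * (-1:ℝ) ^ (j - S.card)) • f (ℓ + ∑ m ∈ S, ρs m) := by
  funext ℓ
  rw [Dmulti, Finset.smul_sum]
  apply Finset.sum_congr rfl
  intro S _
  rw [smul_smul]

lemma Hop_multipole_single {n : ℕ} (R : Finset (Vec d)) (C : Vec d → Vec d → Fin N → Fin N → ℝ)
    (b : ℝ) (ρs : Fin n → Vec d) (f : Vec d → Vec N) (ℓ : Vec d) :
    Hop d N R C (fun x => b • Dmulti ρs f x) ℓ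
      = ∑ S : Finset (Fin n), (b * (-1:ℝ) ^ (n - S.card)) •
          Hop d N R C f (ℓ + ∑ m ∈ S, ρs m) := by
  have h1 : (fun x => b • Dmulti ρs f x)
      = fun x => ∑ S : Finset (Fin n), (fun (S : Finset (Fin n)) (x : Vec d) =>
          (b * (-1:ℝ) ^ (n - S.card)) • f (x + ∑ m ∈ S, ρs m)) S x := Dmulti_smul_eq b ρs f
  rw [h1, Hop_sum R C Finset.univ
    (fun (S : Finset (Fin n)) (x : Vec d) =>
      (b * (-1:ℝ) ^ (n - S.card)) • f (x + ∑ m ∈ S, ρs m)) ℓ]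
  apply Finset.sum_congr rfl
  intro S _
  exact Hop_smul_shift R C _ f _ ℓ

/-- Evaluation of `H[v_b]` at lattice points. -/
lemma Hop_multipole_eq {p : ℕ}
    (A : Matrix (Fin d) (Fin d) ℝ)
    (R : Finset (Vec d)) (C : Vec d → Vec d → Fin N → Fin N → ℝ)
    (G : Vec d → Fin N → Fin N → ℝ)
    (hG1 : ∀ (k : Fin N) (z : Fin d → ℤ),
      Hop d N R C (col G k) (latticePt d A z) =
        if latticePt d A z = 0 then Pi.single k 1 else 0)
    (s : Fin d → Vec d) (ws : Fin d → Fin d → ℤ)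
    (hws : ∀ i, s i = latticePt d A (ws i))
    (b : (i : Fin p) → Fin N → (Fin (i : ℕ) → Fin d) → ℝ) (z : Fin d → ℤ) :
    Hop d N R C
      (fun ℓ => ∑ i : Fin p, ∑ k : Fin N,
        multipole d N s (i : ℕ) (b i k) (col G k) ℓ) (latticePt d A z)
    = ∑ i : Fin p, ∑ k : Fin N, ∑ σv : Fin (i:ℕ) → Fin d, ∑ S : Finset (Fin (i:ℕ)),
        (b i k σv * (-1:ℝ) ^ ((i:ℕ) - S.card)) •
          (if latticePt d A (z + ∑ m ∈ S, ws (σv m)) = 0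
            then (Pi.single k 1 : Vec N) else 0) := by
  rw [Hop_sum R C Finset.univ
    (fun (i : Fin p) (ℓ : Vec d) => ∑ k : Fin N, multipole d N s (i : ℕ) (b i k) (col G k) ℓ)]
  apply Finset.sum_congr rfl
  intro i _
  rw [Hop_sum R C Finset.univ
    (fun (k : Fin N) (ℓ : Vec d) => multipole d N s (i : ℕ) (b i k) (col G k) ℓ)]
  apply Finset.sum_congr rfl
  intro k _
  rw [show (fun ℓ => multipole d N s (i : ℕ) (b i k) (col G k) ℓ)
      = fun ℓ => ∑ σv : Fin (i:ℕ) → Fin d, (fun (σv : Fin (i:ℕ) → Fin d) (ℓ : Vec d) =>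
          b i k σv • Dmulti (fun m => s (σv m)) (col G k) ℓ) σv ℓ from rfl]
  rw [Hop_sum R C Finset.univ
    (fun (σv : Fin (i:ℕ) → Fin d) (ℓ : Vec d) =>
      b i k σv • Dmulti (fun m => s (σv m)) (col G k) ℓ)]
  apply Finset.sum_congr rfl
  intro σv _
  rw [Hop_multipole_single R C (b i k σv) (fun m => s (σv m)) (col G k)]
  apply Finset.sum_congr rfl
  intro S _
  have hpt : latticePt d A z + ∑ m ∈ S, s (σv m)
      = latticePt d A (z + ∑ m ∈ S, ws (σv m)) := by
    rw [latticePt_add, latticePt_finsum]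
    congr 1
    exact Finset.sum_congr rfl (fun m _ => hws (σv m))
  rw [hpt, hG1 k]


lemma Hop_multipole_compact {p : ℕ}
    (A : Matrix (Fin d) (Fin d) ℝ)
    (R : Finset (Vec d)) (C : Vec d → Vec d → Fin N → Fin N → ℝ)
    (G : Vec d → Fin N → Fin N → ℝ)
    (hG1 : ∀ (k : Fin N) (z : Fin d → ℤ),
      Hop d N R C (col G k) (latticePt d A z) =
        if latticePt d A z = 0 then Pi.single k 1 else 0)
    (s : Fin d → Vec d) (ws : Fin d → Fin d → ℤ)
    (hws : ∀ i, s i = latticePt d A (ws i))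
    (b : (i : Fin p) → Fin N → (Fin (i : ℕ) → Fin d) → ℝ) :
    ∃ rad : ℝ, ∀ z : Fin d → ℤ, rad ≤ enorm (latticePt d A z) →
      Hop d N R C
        (fun ℓ => ∑ i : Fin p, ∑ k : Fin N,
          multipole d N s (i : ℕ) (b i k) (col G k) ℓ) (latticePt d A z) = 0 := by
  classical
  set B : ℝ := ∑ i : Fin p, ∑ σv : Fin (i:ℕ) → Fin d, ∑ S : Finset (Fin (i:ℕ)),
    enorm (latticePt d A (∑ m ∈ S, ws (σv m))) with hB
  refine ⟨1 + B, fun z hz => ?_⟩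
  rw [Hop_multipole_eq A R C G hG1 s ws hws b z]
  apply Finset.sum_eq_zero; intro i _
  apply Finset.sum_eq_zero; intro k _
  apply Finset.sum_eq_zero; intro σv _
  apply Finset.sum_eq_zero; intro S _
  have hcond : ¬ (latticePt d A (z + ∑ m ∈ S, ws (σv m)) = 0) := by
    intro h0
    rw [latticePt_add] at h0
    have h1 : latticePt d A z = -(latticePt d A (∑ m ∈ S, ws (σv m))) :=
      eq_neg_of_add_eq_zero_left h0
    have h2 : enorm (latticePt d A z) = enorm (latticePt d A (∑ m ∈ S, ws (σv m))) := by
      rw [h1, enorm_neg]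
    have t1 : enorm (latticePt d A (∑ m ∈ S, ws (σv m)))
        ≤ ∑ S' : Finset (Fin (i:ℕ)), enorm (latticePt d A (∑ m ∈ S', ws (σv m))) :=
      Finset.single_le_sum
        (f := fun S' : Finset (Fin (i:ℕ)) => enorm (latticePt d A (∑ m ∈ S', ws (σv m))))
        (fun _ _ => enorm_nonneg _) (Finset.mem_univ S)
    have t2 : (∑ S' : Finset (Fin (i:ℕ)), enorm (latticePt d A (∑ m ∈ S', ws (σv m))))
        ≤ ∑ σv' : Fin (i:ℕ) → Fin d, ∑ S' : Finset (Fin (i:ℕ)),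
            enorm (latticePt d A (∑ m ∈ S', ws (σv' m))) :=
      Finset.single_le_sum
        (f := fun σv' : Fin (i:ℕ) → Fin d => ∑ S' : Finset (Fin (i:ℕ)),
          enorm (latticePt d A (∑ m ∈ S', ws (σv' m))))
        (fun _ _ => Finset.sum_nonneg (fun _ _ => enorm_nonneg _)) (Finset.mem_univ σv)
    have t3 : (∑ σv' : Fin (i:ℕ) → Fin d, ∑ S' : Finset (Fin (i:ℕ)),
            enorm (latticePt d A (∑ m ∈ S', ws (σv' m)))) ≤ B :=
      Finset.single_le_sum
        (f := fun i' : Fin p => ∑ σv' : Fin (i':ℕ) → Fin d, ∑ S' : Finset (Fin (i':ℕ)),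
          enorm (latticePt d A (∑ m ∈ S', ws (σv' m))))
        (fun _ _ => Finset.sum_nonneg (fun _ _ => Finset.sum_nonneg (fun _ _ => enorm_nonneg _)))
        (Finset.mem_univ i)
    linarith [hz, h2, t1, t2, t3]
  rw [if_neg hcond, smul_zero]


/-- `j`-th moments of the multipole field, closed form. -/
def MomV {d N : ℕ} (s : Fin d → Vec d) {p : ℕ}
    (b : (i : Fin p) → Fin N → (Fin (i : ℕ) → Fin d) → ℝ)
    (j : ℕ) (a : Fin N) (js : Fin j → Fin d) : ℝ :=
  ∑ i : Fin p, ∑ σv : Fin (i:ℕ) → Fin d, b i a σv * Pterm s j (i:ℕ) σv js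

lemma hasSum_ite_latticePt (A : Matrix (Fin d) (Fin d) ℝ) (hA : IsUnit A.det)
    (w : Fin d → ℤ) (c : ℝ) (g : (Fin d → ℤ) → ℝ) :
    HasSum (fun z : Fin d → ℤ => (if latticePt d A (z + w) = 0 then c else 0) * g z)
      (c * g (-w)) := by
  classical
  have hfun : (fun z : Fin d → ℤ => (if latticePt d A (z + w) = 0 then c else 0) * g z)
      = fun z => if z = -w then c * g (-w) else 0 := by
    funext z
    by_cases hz : z = -w
    · subst hz
      rw [if_pos (by rw [neg_add_cancel, latticePt_zero]), if_pos rfl]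
    · rw [if_neg hz, if_neg, zero_mul]
      intro hc
      apply hz
      have h0 : latticePt d A (z + w) = latticePt d A 0 := by rw [hc, latticePt_zero]
      have := latticePt_injective hA h0
      exact eq_neg_of_add_eq_zero_left this
  rw [hfun]
  exact hasSum_ite_eq _ _

lemma Hop_multipole_hasSum {p : ℕ}
    (A : Matrix (Fin d) (Fin d) ℝ) (hA : IsUnit A.det)
    (R : Finset (Vec d)) (C : Vec d → Vec d → Fin N → Fin N → ℝ)
    (G : Vec d → Fin N → Fin N → ℝ)
    (hG1 : ∀ (k : Fin N) (z : Fin d → ℤ),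
      Hop d N R C (col G k) (latticePt d A z) =
        if latticePt d A z = 0 then Pi.single k 1 else 0)
    (s : Fin d → Vec d) (ws : Fin d → Fin d → ℤ)
    (hws : ∀ i, s i = latticePt d A (ws i))
    (b : (i : Fin p) → Fin N → (Fin (i : ℕ) → Fin d) → ℝ)
    (j : ℕ) (a : Fin N) (js : Fin j → Fin d) :
    HasSum (fun z : Fin d → ℤ =>
      Hop d N R C
        (fun ℓ => ∑ i : Fin p, ∑ k : Fin N,
          multipole d N s (i : ℕ) (b i k) (col G k) ℓ)
        (latticePt d A z) a * ∏ m, latticePt d A z (js m))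
      (MomV s b j a js) := by
  classical
  -- point-mass HasSum
  have h1 : ∀ (i : Fin p) (k : Fin N) (σv : Fin (i:ℕ) → Fin d) (S : Finset (Fin (i:ℕ))),
      HasSum (fun z : Fin d → ℤ =>
        (if latticePt d A (z + ∑ m ∈ S, ws (σv m)) = 0 then (1:ℝ) else 0) *
          (b i k σv * (-1:ℝ) ^ ((i:ℕ) - S.card) * (Pi.single k 1 : Vec N) a *
            ∏ m, latticePt d A z (js m)))
        (b i k σv * (-1:ℝ) ^ ((i:ℕ) - S.card) * (Pi.single k 1 : Vec N) a *
          ∏ m, latticePt d A (-(∑ m' ∈ S, ws (σv m'))) (js m)) := by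
    intro i k σv S
    have := hasSum_ite_latticePt A hA (∑ m ∈ S, ws (σv m)) 1
      (fun z => b i k σv * (-1:ℝ) ^ ((i:ℕ) - S.card) * (Pi.single k 1 : Vec N) a *
        ∏ m, latticePt d A z (js m))
    simpa using this
  have h2 : ∀ (i : Fin p) (k : Fin N) (σv : Fin (i:ℕ) → Fin d),
      HasSum (fun z : Fin d → ℤ => ∑ S : Finset (Fin (i:ℕ)),
        (if latticePt d A (z + ∑ m ∈ S, ws (σv m)) = 0 then (1:ℝ) else 0) *
          (b i k σv * (-1:ℝ) ^ ((i:ℕ) - S.card) * (Pi.single k 1 : Vec N) a *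
            ∏ m, latticePt d A z (js m)))
        (∑ S : Finset (Fin (i:ℕ)),
          b i k σv * (-1:ℝ) ^ ((i:ℕ) - S.card) * (Pi.single k 1 : Vec N) a *
            ∏ m, latticePt d A (-(∑ m' ∈ S, ws (σv m'))) (js m)) :=
    fun i k σv => hasSum_sum (fun S _ => h1 i k σv S)
  have h3 : ∀ (i : Fin p) (k : Fin N),
      HasSum (fun z : Fin d → ℤ => ∑ σv : Fin (i:ℕ) → Fin d, ∑ S : Finset (Fin (i:ℕ)),
        (if latticePt d A (z + ∑ m ∈ S, ws (σv m)) = 0 then (1:ℝ) else 0) *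
          (b i k σv * (-1:ℝ) ^ ((i:ℕ) - S.card) * (Pi.single k 1 : Vec N) a *
            ∏ m, latticePt d A z (js m)))
        (∑ σv : Fin (i:ℕ) → Fin d, ∑ S : Finset (Fin (i:ℕ)),
          b i k σv * (-1:ℝ) ^ ((i:ℕ) - S.card) * (Pi.single k 1 : Vec N) a *
            ∏ m, latticePt d A (-(∑ m' ∈ S, ws (σv m'))) (js m)) :=
    fun i k => hasSum_sum (fun σv _ => h2 i k σv)
  have h4 : ∀ (i : Fin p),
      HasSum (fun z : Fin d → ℤ => ∑ k : Fin N, ∑ σv : Fin (i:ℕ) → Fin d,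
        ∑ S : Finset (Fin (i:ℕ)),
        (if latticePt d A (z + ∑ m ∈ S, ws (σv m)) = 0 then (1:ℝ) else 0) *
          (b i k σv * (-1:ℝ) ^ ((i:ℕ) - S.card) * (Pi.single k 1 : Vec N) a *
            ∏ m, latticePt d A z (js m)))
        (∑ k : Fin N, ∑ σv : Fin (i:ℕ) → Fin d, ∑ S : Finset (Fin (i:ℕ)),
          b i k σv * (-1:ℝ) ^ ((i:ℕ) - S.card) * (Pi.single k 1 : Vec N) a *
            ∏ m, latticePt d A (-(∑ m' ∈ S, ws (σv m'))) (js m)) :=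
    fun i => hasSum_sum (fun k _ => h3 i k)
  have h5 : HasSum (fun z : Fin d → ℤ => ∑ i : Fin p, ∑ k : Fin N,
        ∑ σv : Fin (i:ℕ) → Fin d, ∑ S : Finset (Fin (i:ℕ)),
        (if latticePt d A (z + ∑ m ∈ S, ws (σv m)) = 0 then (1:ℝ) else 0) *
          (b i k σv * (-1:ℝ) ^ ((i:ℕ) - S.card) * (Pi.single k 1 : Vec N) a *
            ∏ m, latticePt d A z (js m)))
        (∑ i : Fin p, ∑ k : Fin N, ∑ σv : Fin (i:ℕ) → Fin d, ∑ S : Finset (Fin (i:ℕ)),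
          b i k σv * (-1:ℝ) ^ ((i:ℕ) - S.card) * (Pi.single k 1 : Vec N) a *
            ∏ m, latticePt d A (-(∑ m' ∈ S, ws (σv m'))) (js m)) :=
    hasSum_sum (fun i _ => h4 i)
  -- identify the function
  have hfun : ∀ z : Fin d → ℤ,
      Hop d N R C
        (fun ℓ => ∑ i : Fin p, ∑ k : Fin N,
          multipole d N s (i : ℕ) (b i k) (col G k) ℓ)
        (latticePt d A z) a * ∏ m, latticePt d A z (js m)
      = ∑ i : Fin p, ∑ k : Fin N, ∑ σv : Fin (i:ℕ) → Fin d, ∑ S : Finset (Fin (i:ℕ)),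
        (if latticePt d A (z + ∑ m ∈ S, ws (σv m)) = 0 then (1:ℝ) else 0) *
          (b i k σv * (-1:ℝ) ^ ((i:ℕ) - S.card) * (Pi.single k 1 : Vec N) a *
            ∏ m, latticePt d A z (js m)) := by
    intro z
    rw [Hop_multipole_eq A R C G hG1 s ws hws b z]
    rw [Finset.sum_apply, Finset.sum_mul]
    apply Finset.sum_congr rfl; intro i _
    rw [Finset.sum_apply, Finset.sum_mul]
    apply Finset.sum_congr rfl; intro k _
    rw [Finset.sum_apply, Finset.sum_mul]
    apply Finset.sum_congr rfl; intro σv _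
    rw [Finset.sum_apply, Finset.sum_mul]
    apply Finset.sum_congr rfl; intro S _
    rw [Pi.smul_apply, smul_eq_mul]
    rw [apply_ite (fun v : Vec N => v a)]
    simp only [Pi.zero_apply]
    by_cases hcond : latticePt d A (z + ∑ m ∈ S, ws (σv m)) = 0
    · rw [if_pos hcond, if_pos hcond]; ring
    · rw [if_neg hcond, if_neg hcond]; ring
  -- identify the value
  have hvalue : (∑ i : Fin p, ∑ k : Fin N, ∑ σv : Fin (i:ℕ) → Fin d,
        ∑ S : Finset (Fin (i:ℕ)),
        b i k σv * (-1:ℝ) ^ ((i:ℕ) - S.card) * (Pi.single k 1 : Vec N) a *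
          ∏ m, latticePt d A (-(∑ m' ∈ S, ws (σv m'))) (js m))
      = MomV s b j a js := by
    unfold MomV
    apply Finset.sum_congr rfl; intro i _
    rw [Finset.sum_comm]
    apply Finset.sum_congr rfl; intro σv _
    have hy : ∀ S : Finset (Fin (i:ℕ)),
        latticePt d A (-(∑ m' ∈ S, ws (σv m'))) = -(ysum s σv S) := by
      intro S
      rw [latticePt_neg, latticePt_finsum]
      unfold ysum
      congr 1
      exact Finset.sum_congr rfl (fun m _ => (hws (σv m)).symm)
    have hk : ∀ k : Fin N, (∑ S : Finset (Fin (i:ℕ)),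
        b i k σv * (-1:ℝ) ^ ((i:ℕ) - S.card) * (Pi.single k 1 : Vec N) a *
          ∏ m, latticePt d A (-(∑ m' ∈ S, ws (σv m'))) (js m))
        = if a = k then (b i k σv * ∑ S : Finset (Fin (i:ℕ)),
            (-1:ℝ) ^ ((i:ℕ) - S.card) * ∏ m, (-(ysum s σv S)) (js m)) else 0 := by
      intro k
      by_cases hak : a = k
      · rw [if_pos hak, Finset.mul_sum]
        apply Finset.sum_congr rfl; intro S _
        rw [hy S, hak, Pi.single_eq_same]
        ring
      · rw [if_neg hak]
        apply Finset.sum_eq_zero; intro S _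
        simp [Pi.single_apply, hak]
    rw [Finset.sum_congr rfl (fun k _ => hk k)]
    rw [Finset.sum_ite_eq Finset.univ a
      (fun k => b i k σv * ∑ S : Finset (Fin (i:ℕ)),
        (-1:ℝ) ^ ((i:ℕ) - S.card) * ∏ m, (-(ysum s σv S)) (js m))]
    simp only [Finset.mem_univ, if_pos]
    rfl
  rw [← hvalue]
  exact HasSum.congr_fun h5 (fun z => hfun z)


/-! ### Solving the triangular moment system -/

/-- Recursive solution of the triangular system of moment equations. -/
def bsolRec (s : Fin d → Vec d) (Tu : (j : ℕ) → (Fin j → Fin d) → ℝ) (n : ℕ) :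
    (Fin n → Fin d) → ℝ :=
  kron d n (Smat s)⁻¹ fun js =>
    (((-1:ℝ)^n * (n.factorial : ℝ))⁻¹) *
      (Tu n js - ∑ i : Fin n, ∑ σv : Fin (i:ℕ) → Fin d,
        bsolRec s Tu (i:ℕ) σv * Pterm s n (i:ℕ) σv js)
  termination_by n
  decreasing_by exact i.isLt

lemma bsolRec_symm (s : Fin d → Vec d) (Tu : (j : ℕ) → (Fin j → Fin d) → ℝ)
    (hTu : ∀ (j : ℕ) (π : Equiv.Perm (Fin j)) (js : Fin j → Fin d), Tu j (js ∘ ⇑π) = Tu j js)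
    (n : ℕ) : SymArr (bsolRec s Tu n) := by
  rw [bsolRec]
  apply kron_symm
  intro π js
  have h1 : Tu n (js ∘ ⇑π) = Tu n js := hTu n π js
  have h2 : ∀ (i : Fin n) (σv : Fin (i:ℕ) → Fin d),
      Pterm s n (i:ℕ) σv (js ∘ ⇑π) = Pterm s n (i:ℕ) σv js := fun i σv => Pterm_symm s σv js π
  simp only [h1, h2]

/-- Splitting of the full moment sum into diagonal and lower-order parts. -/
lemma momsum_split (s : Fin d → Vec d) (β : (n : ℕ) → (Fin n → Fin d) → ℝ)
    (p n : ℕ) (hn : n < p) (hβn : SymArr (β n)) (js : Fin n → Fin d) :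
    (∑ i : Fin p, ∑ σv : Fin (i:ℕ) → Fin d, β (i:ℕ) σv * Pterm s n (i:ℕ) σv js)
      = (-1:ℝ)^n * (n.factorial : ℝ) * kron d n (Smat s) (β n) js
        + ∑ i : Fin n, ∑ σv : Fin (i:ℕ) → Fin d, β (i:ℕ) σv * Pterm s n (i:ℕ) σv js := by
  classical
  have hsplit := (Finset.add_sum_erase Finset.univ
    (fun i : Fin p => ∑ σv : Fin (i:ℕ) → Fin d, β (i:ℕ) σv * Pterm s n (i:ℕ) σv js)
    (Finset.mem_univ (⟨n, hn⟩ : Fin p))).symm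
  rw [hsplit]
  congr 1
  · exact Pterm_diag_sym s (β n) hβn js
  · have hz : ∀ i ∈ Finset.univ.erase (⟨n, hn⟩ : Fin p),
        (∑ σv : Fin (i:ℕ) → Fin d, β (i:ℕ) σv * Pterm s n (i:ℕ) σv js)
          = if (i:ℕ) < n then
              (∑ σv : Fin (i:ℕ) → Fin d, β (i:ℕ) σv * Pterm s n (i:ℕ) σv js) else 0 := by
      intro i hi
      rcases lt_trichotomy ((i:ℕ)) n with h | h | h
      · rw [if_pos h]
      · exact absurd (Fin.ext h) (Finset.mem_erase.mp hi).1
      · rw [if_neg (by omega)]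
        apply Finset.sum_eq_zero
        intro σv _
        rw [Pterm_eq_zero s σv js h, mul_zero]
    rw [Finset.sum_congr rfl hz]
    rw [Finset.sum_erase _ (by simp)]
    have h1 : (∑ i : Fin p, if (i:ℕ) < n then
        (∑ σv : Fin (i:ℕ) → Fin d, β (i:ℕ) σv * Pterm s n (i:ℕ) σv js) else 0)
        = ∑ m ∈ Finset.range p, (fun m => if m < n then
            (∑ σv : Fin m → Fin d, β m σv * Pterm s n m σv js) else 0) m :=
      Fin.sum_univ_eq_sum_range
        (fun m => if m < n then (∑ σv : Fin m → Fin d, β m σv * Pterm s n m σv js) else 0) p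
    rw [h1]
    have h2 : (∑ m ∈ Finset.range p, (fun m => if m < n then
        (∑ σv : Fin m → Fin d, β m σv * Pterm s n m σv js) else 0) m)
        = ∑ m ∈ (Finset.range p).filter (fun m => m < n),
            (∑ σv : Fin m → Fin d, β m σv * Pterm s n m σv js) :=
      (Finset.sum_filter _ _).symm
    rw [h2]
    have h3 : (Finset.range p).filter (fun m => m < n) = Finset.range n := by
      ext m
      simp only [Finset.mem_filter, Finset.mem_range]
      omega
    rw [h3]
    exact (Fin.sum_univ_eq_sum_range
      (fun m => ∑ σv : Fin m → Fin d, β m σv * Pterm s n m σv js) n).symm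

lemma moment_solve (s : Fin d → Vec d) (hS : IsUnit (Smat s).det)
    (Tu : (j : ℕ) → (Fin j → Fin d) → ℝ)
    (hTu : ∀ (j : ℕ) (π : Equiv.Perm (Fin j)) (js : Fin j → Fin d), Tu j (js ∘ ⇑π) = Tu j js)
    (p n : ℕ) (hn : n < p) (js : Fin n → Fin d) :
    (∑ i : Fin p, ∑ σv : Fin (i:ℕ) → Fin d,
      bsolRec s Tu (i:ℕ) σv * Pterm s n (i:ℕ) σv js) = Tu n js := by
  rw [momsum_split s (bsolRec s Tu) p n hn (bsolRec_symm s Tu hTu n) js]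
  have hker : kron d n (Smat s) (bsolRec s Tu n)
      = fun js => (((-1:ℝ)^n * (n.factorial : ℝ))⁻¹) *
          (Tu n js - ∑ i : Fin n, ∑ σv : Fin (i:ℕ) → Fin d,
            bsolRec s Tu (i:ℕ) σv * Pterm s n (i:ℕ) σv js) := by
    conv_lhs => rw [bsolRec]
    exact kron_kron (Smat s) (Smat s)⁻¹ (Matrix.mul_nonsing_inv _ hS) _
  rw [hker]
  have hfac : ((-1:ℝ)^n * (n.factorial : ℝ)) ≠ 0 := by
    apply mul_ne_zero
    · exact pow_ne_zero _ (by norm_num)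
    · exact_mod_cast Nat.factorial_ne_zero n
  field_simp
  ring

lemma moment_unique (s : Fin d → Vec d) (hS : IsUnit (Smat s).det)
    (p : ℕ) (β γ : (n : ℕ) → (Fin n → Fin d) → ℝ)
    (hβ : ∀ n, SymArr (β n)) (hγ : ∀ n, SymArr (γ n))
    (heq : ∀ n, n < p → ∀ js : Fin n → Fin d,
      (∑ i : Fin p, ∑ σv : Fin (i:ℕ) → Fin d, β (i:ℕ) σv * Pterm s n (i:ℕ) σv js)
        = ∑ i : Fin p, ∑ σv : Fin (i:ℕ) → Fin d, γ (i:ℕ) σv * Pterm s n (i:ℕ) σv js) :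
    ∀ n, n < p → β n = γ n := by
  intro n
  induction n using Nat.strong_induction_on with
  | _ n ih =>
    intro hn
    have hlow : (fun js : Fin n → Fin d =>
        ∑ i : Fin n, ∑ σv : Fin (i:ℕ) → Fin d, β (i:ℕ) σv * Pterm s n (i:ℕ) σv js)
        = fun js => ∑ i : Fin n, ∑ σv : Fin (i:ℕ) → Fin d,
            γ (i:ℕ) σv * Pterm s n (i:ℕ) σv js := by
      funext js
      apply Finset.sum_congr rfl
      intro i _
      rw [ih (i:ℕ) i.isLt (lt_trans i.isLt hn)]
    have hdiag : kron d n (Smat s) (β n) = kron d n (Smat s) (γ n) := by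
      funext js
      have h1 := heq n hn js
      rw [momsum_split s β p n hn (hβ n) js, momsum_split s γ p n hn (hγ n) js] at h1
      have h2 := congrFun hlow js
      have hfac : ((-1:ℝ)^n * (n.factorial : ℝ)) ≠ 0 := by
        apply mul_ne_zero
        · exact pow_ne_zero _ (by norm_num)
        · exact_mod_cast Nat.factorial_ne_zero n
      have h3 : (-1:ℝ)^n * (n.factorial : ℝ) * kron d n (Smat s) (β n) js
          = (-1:ℝ)^n * (n.factorial : ℝ) * kron d n (Smat s) (γ n) js := by linarith
      exact mul_left_cancel₀ hfac h3
    have := congrArg (kron d n (Smat s)⁻¹) hdiag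
    rwa [kron_kron (Smat s)⁻¹ (Smat s) (Matrix.nonsing_inv_mul _ hS),
      kron_kron (Smat s)⁻¹ (Smat s) (Matrix.nonsing_inv_mul _ hS)] at this

lemma smat_isUnit_det (s : Fin d → Vec d) (hsind : LinearIndependent ℝ s) :
    IsUnit (Smat s).det := by
  have h1 : LinearIndependent ℝ (fun i => (Matrix.of s : Matrix (Fin d) (Fin d) ℝ) i) := hsind
  have h2 : IsUnit (Matrix.of s : Matrix (Fin d) (Fin d) ℝ) :=
    Matrix.linearIndependent_rows_iff_isUnit.mp h1
  have h3 : IsUnit (Matrix.of s : Matrix (Fin d) (Fin d) ℝ).det :=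
    (Matrix.isUnit_iff_isUnit_det _).mp h2
  have h4 : Smat s = Matrix.transpose (Matrix.of s : Matrix (Fin d) (Fin d) ℝ) := rfl
  rw [h4, Matrix.det_transpose]
  exact h3

end Aux











/-- Lemma: moment matching by multipole fields. -/
theorem moment_matching_multipole
    (d N : ℕ) (hd : 2 ≤ d)
    (A : Matrix (Fin d) (Fin d) ℝ) (hA : IsUnit A.det)
    (R : Finset (Vec d)) (hR0 : (0 : Vec d) ∉ R)
    (hRlat : ∀ ρ ∈ R, ρ ∈ Lattice d A)
    (hRsym : ∀ ρ ∈ R, -ρ ∈ R)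
    (hRspan : ∀ x ∈ Lattice d A, ∃ c : Vec d → ℤ, x = ∑ ρ ∈ R, (c ρ : ℝ) • ρ)
    (C : Vec d → Vec d → Fin N → Fin N → ℝ)
    (hCsym : ∀ σ ρ i j, C σ ρ i j = C ρ σ j i)
    (hCpt : ∀ σ ρ, C σ ρ = C (-σ) (-ρ))
    (hstab : IsStable d N A R C)
    (G : Vec d → Fin N → Fin N → ℝ) (hG : IsLatticeGreen d N A R C G)
    (s : Fin d → Vec d) (hslat : ∀ i, s i ∈ Lattice d A)
    (hsind : LinearIndependent ℝ s)
    (hsspan : ∀ x ∈ Lattice d A, ∃ z : Fin d → ℤ, x = ∑ i, (z i : ℝ) • s i)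
    (u : Vec d → Vec N) (hu : InH1 A R u)
    (p : ℕ) (hp : 1 ≤ p) (α : ℕ) (c : ℝ) (hc : 0 < c)
    (hbound : ∀ z : Fin d → ℤ,
      enorm (Hop d N R C u (latticePt d A z)) ≤
        c * ang (latticePt d A z) ^ (-(d : ℝ) - p) *
          Real.log (ang (latticePt d A z)) ^ α) :
    -- the linearized force of any multipole field has compact support …
    (∀ b : (i : Fin p) → Fin N → (Fin (i : ℕ) → Fin d) → ℝ, ∃ rad : ℝ,
      ∀ z : Fin d → ℤ, rad ≤ enorm (latticePt d A z) →
        Hop d N R C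
          (fun ℓ => ∑ i : Fin p, ∑ k : Fin N,
            multipole d N s (i : ℕ) (b i k) (col G k) ℓ)
          (latticePt d A z) = 0) ∧
    -- … and there are unique symmetric arrays matching all moments of `u`
    (∃! b : (i : Fin p) → Fin N → (Fin (i : ℕ) → Fin d) → ℝ,
      (∀ (i : Fin p) (k : Fin N), SymArr (b i k)) ∧
      (∀ j : ℕ, j < p → ∀ (a : Fin N) (js : Fin j → Fin d),
        ∃ mval : ℝ,
          HasSum (fun z : Fin d → ℤ =>
            Hop d N R C u (latticePt d A z) a * ∏ m, latticePt d A z (js m)) mval ∧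
          HasSum (fun z : Fin d → ℤ =>
            Hop d N R C
              (fun ℓ => ∑ i : Fin p, ∑ k : Fin N,
                multipole d N s (i : ℕ) (b i k) (col G k) ℓ)
              (latticePt d A z) a * ∏ m, latticePt d A z (js m)) mval)) := by
  classical
  -- integer coordinates of the basis vectors
  have hwex : ∀ i : Fin d, ∃ w : Fin d → ℤ, s i = latticePt d A w := by
    intro i
    obtain ⟨w, hw⟩ := hslat i
    exact ⟨w, hw.symm⟩
  choose ws hws using hwex
  have hG1 := hG.1
  have hS := smat_isUnit_det s hsind
  -- the target moments of u
  set Tu : Fin N → (j : ℕ) → (Fin j → Fin d) → ℝ := fun a j js =>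
    ∑' z : Fin d → ℤ, Hop d N R C u (latticePt d A z) a * ∏ m, latticePt d A z (js m)
    with hTudef
  have hsum : ∀ (j : ℕ), j < p → ∀ (a : Fin N) (js : Fin j → Fin d),
      Summable (fun z : Fin d → ℤ =>
        Hop d N R C u (latticePt d A z) a * ∏ m, latticePt d A z (js m)) :=
    fun j hj a js => moment_summable hd A hA R C u p α c hc hbound j hj a js
  have hTuhasSum : ∀ (j : ℕ), j < p → ∀ (a : Fin N) (js : Fin j → Fin d),
      HasSum (fun z : Fin d → ℤ =>
        Hop d N R C u (latticePt d A z) a * ∏ m, latticePt d A z (js m)) (Tu a j js) :=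
    fun j hj a js => (hsum j hj a js).hasSum
  have hTuSym : ∀ (a : Fin N) (j : ℕ) (π : Equiv.Perm (Fin j)) (js : Fin j → Fin d),
      Tu a j (js ∘ ⇑π) = Tu a j js := by
    intro a j π js
    simp only [hTudef]
    apply tsum_congr
    intro z
    congr 1
    have := Equiv.prod_comp π (fun m => latticePt d A z (js m))
    simpa [Function.comp] using this
  constructor
  · intro b
    exact Hop_multipole_compact A R C G hG1 s ws hws b
  · set b₀ : (i : Fin p) → Fin N → (Fin (i : ℕ) → Fin d) → ℝ :=
      fun i k => bsolRec s (Tu k) (i : ℕ) with hb₀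
    have hmomb₀ : ∀ (j : ℕ), j < p → ∀ (a : Fin N) (js : Fin j → Fin d),
        MomV s b₀ j a js = Tu a j js := by
      intro j hj a js
      unfold MomV
      simp only [hb₀]
      exact moment_solve s hS (Tu a) (hTuSym a) p j hj js
    refine ⟨b₀, ⟨?_, ?_⟩, ?_⟩
    · intro i k
      exact bsolRec_symm s (Tu k) (hTuSym k) (i : ℕ)
    · intro j hj a js
      refine ⟨Tu a j js, hTuhasSum j hj a js, ?_⟩
      have h1 := Hop_multipole_hasSum A hA R C G hG1 s ws hws b₀ j a js
      rwa [hmomb₀ j hj a js] at h1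
    · intro b' hb'
      obtain ⟨hb'sym, hb'mom⟩ := hb'
      have hmomb' : ∀ (j : ℕ), j < p → ∀ (a : Fin N) (js : Fin j → Fin d),
          MomV s b' j a js = Tu a j js := by
        intro j hj a js
        obtain ⟨mval, hu1, hv1⟩ := hb'mom j hj a js
        have h2 : mval = Tu a j js := hu1.unique (hTuhasSum j hj a js)
        have h3 := Hop_multipole_hasSum A hA R C G hG1 s ws hws b' j a js
        exact (h3.unique hv1).trans h2
      funext i k
      -- apply uniqueness of the triangular system for the component `k`
      set β : (n : ℕ) → (Fin n → Fin d) → ℝ :=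
        fun n => if h : n < p then b' ⟨n, h⟩ k else fun _ => 0 with hβdef
      set γ : (n : ℕ) → (Fin n → Fin d) → ℝ := fun n => bsolRec s (Tu k) n with hγdef
      have hβs : ∀ n, SymArr (β n) := by
        intro n
        simp only [hβdef]
        by_cases h : n < p
        · rw [dif_pos h]; exact hb'sym ⟨n, h⟩ k
        · rw [dif_neg h]; intro π σv; rfl
      have hγs : ∀ n, SymArr (γ n) := fun n => bsolRec_symm s (Tu k) (hTuSym k) n
      have hβMom : ∀ (n : ℕ) (hn : n < p) (js : Fin n → Fin d),
          (∑ i : Fin p, ∑ σv : Fin (i:ℕ) → Fin d, β (i:ℕ) σv * Pterm s n (i:ℕ) σv js)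
            = MomV s b' n k js := by
        intro n hn js
        unfold MomV
        apply Finset.sum_congr rfl
        intro i _
        apply Finset.sum_congr rfl
        intro σv _
        congr 1
        simp only [hβdef]
        rw [dif_pos i.isLt]
      have heq : ∀ n, n < p → ∀ js : Fin n → Fin d,
          (∑ i : Fin p, ∑ σv : Fin (i:ℕ) → Fin d, β (i:ℕ) σv * Pterm s n (i:ℕ) σv js)
            = ∑ i : Fin p, ∑ σv : Fin (i:ℕ) → Fin d, γ (i:ℕ) σv * Pterm s n (i:ℕ) σv js := by
        intro n hn js
        rw [hβMom n hn js, hmomb' n hn k js]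
        simp only [hγdef]
        exact (moment_solve s hS (Tu k) (hTuSym k) p n hn js).symm
      have huniq := moment_unique s hS p β γ hβs hγs heq (i : ℕ) i.isLt
      have h5 : β (i : ℕ) = b' i k := by
        simp only [hβdef]
        rw [dif_pos i.isLt]
      have h6 : γ (i : ℕ) = b₀ i k := by simp only [hγdef, hb₀]
      rw [← h5, huniq, h6]

end Defect
end
end
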